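/- arXiv:1805.07450 — 8 statements merged into one kernel-verified Lean document; each statement's English description precedes it below -/
import Mathlib

section
/- Let G = (V, E) be a complete 3-tree on a finite vertex set V with |V| ≥ 3, let the edge set be partitioned as E = H ∪ F with H ∩ F = ∅, fix lengths l_H : H → ℝ≥0, fix an edge f₀ ∈ F, and fix lengths l : (F \ {f₀}) → ℝ≥0 on all other edges of F. Then the set of values t ∈ ℝ≥0 for which there exists a map p : V → EuclideanSpace ℝ (Fin 3) satisfying dist (p u) (p v) = l_H e for every edge e = {u,v} ∈ H, dist (p u) (p v) = l f for every edge f = {u,v} ∈ F \ {f₀}, and dist (p u) (p v) = t for f₀ = {u,v}, is an interval (a convex subset of ℝ). -/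
open scoped NNReal

/-- A complete 3-tree: there is an ordering of the vertices such that the first
three vertices form a triangle and every later vertex is adjacent to exactly
three earlier vertices, which are pairwise adjacent. -/
def IsComplete3Tree {V : Type*} [Fintype V] (G : SimpleGraph V) : Prop :=
  ∃ (n : ℕ) (_ : 3 ≤ n) (v : Fin n ≃ V),
    (∀ i j : Fin n, i.val < 3 → j.val < 3 → i ≠ j → G.Adj (v i) (v j)) ∧
    ∀ i : Fin n, 3 ≤ i.val →
      ∃ N : Finset (Fin n), N.card = 3 ∧ (∀ j ∈ N, j < i) ∧
        (∀ j : Fin n, j < i → (G.Adj (v i) (v j) ↔ j ∈ N)) ∧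
        (∀ j ∈ N, ∀ k ∈ N, j ≠ k → G.Adj (v j) (v k))

section CSPIAux
open scoped RealInnerProductSpace
noncomputable section
local notation "E3" => EuclideanSpace ℝ (Fin 3)

lemma cspi_gram_quad (u : Fin 3 → E3) (w : Fin 3 → ℝ) :
    ∑ i, w i * ∑ j, ⟪u i, u j⟫ * w j = ‖∑ i, w i • u i‖ ^ 2 := by
  rw [← real_inner_self_eq_norm_sq]
  simp only [sum_inner, inner_sum, real_inner_smul_left, real_inner_smul_right, Finset.mul_sum]
  refine Finset.sum_congr rfl fun i _ => Finset.sum_congr rfl fun j _ => ?_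
  rw [real_inner_comm (u j) (u i)]
  ring

lemma cspi_expand (aa bb : E3) : ‖aa - bb‖ ^ 2 = ⟪aa, aa⟫ - 2 * ⟪aa, bb⟫ + ⟪bb, bb⟫ := by
  rw [← real_inner_self_eq_norm_sq]
  exact real_inner_sub_sub_self _ _

lemma cspi_interp (x y : Fin 4 → E3) (μ ν : ℝ) (hμ : 0 ≤ μ) (hν : 0 ≤ ν) :
    ∃ z : Fin 4 → E3, ∀ i j, dist (z i) (z j) ^ 2 =
      μ * dist (x i) (x j) ^ 2 + ν * dist (y i) (y j) ^ 2 := by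
  set G : Matrix (Fin 3) (Fin 3) ℝ := fun i j =>
    μ * ⟪x i.succ - x 0, x j.succ - x 0⟫ + ν * ⟪y i.succ - y 0, y j.succ - y 0⟫ with hG
  have hpsd : G.PosSemidef := by
    rw [Matrix.posSemidef_iff_dotProduct_mulVec]
    constructor
    · ext i j
      rw [Matrix.conjTranspose_apply]
      simp only [hG, star_trivial]
      rw [real_inner_comm (x j.succ - x 0), real_inner_comm (y j.succ - y 0)]
    · intro w
      have hsw : star w = w := by simp
      rw [hsw]
      have hdot : dotProduct w (G.mulVec w) =
          μ * (∑ i, w i * ∑ j, ⟪x i.succ - x 0, x j.succ - x 0⟫ * w j)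
          + ν * (∑ i, w i * ∑ j, ⟪y i.succ - y 0, y j.succ - y 0⟫ * w j) := by
        simp only [dotProduct, Matrix.mulVec, hG, Finset.mul_sum]
        rw [← Finset.sum_add_distrib]
        refine Finset.sum_congr rfl fun i _ => ?_
        rw [← Finset.sum_add_distrib]
        refine Finset.sum_congr rfl fun j _ => ?_
        ring
      rw [hdot, cspi_gram_quad, cspi_gram_quad]
      positivity
  obtain ⟨Bm, hBm⟩ : ∃ Bm : Matrix (Fin 3) (Fin 3) ℝ, G = Bm.conjTranspose * Bm := by
    open scoped MatrixOrder in
    exact (CStarAlgebra.nonneg_iff_eq_star_mul_self.mp (Matrix.nonneg_iff_posSemidef.mpr hpsd))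
  set u : Fin 3 → E3 := fun j => (WithLp.equiv 2 (Fin 3 → ℝ)).symm (fun k => Bm k j) with hu
  have huin : ∀ a b : Fin 3, ⟪u a, u b⟫ = G a b := by
    intro a b
    rw [hBm, PiLp.inner_apply]
    simp only [hu, WithLp.equiv_symm_apply, WithLp.ofLp_toLp, RCLike.inner_apply, conj_trivial,
      Matrix.mul_apply, Matrix.conjTranspose_apply, star_trivial, mul_comm]
  set z : Fin 4 → E3 := fun i => Fin.cases 0 u i with hz
  have hzin : ∀ i j : Fin 4, ⟪z i, z j⟫ =
      μ * ⟪x i - x 0, x j - x 0⟫ + ν * ⟪y i - y 0, y j - y 0⟫ := by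
    intro i j
    induction i using Fin.cases with
    | zero => simp [hz]
    | succ a =>
      induction j using Fin.cases with
      | zero => simp [hz]
      | succ b => simpa [hz] using huin a b
  refine ⟨z, fun i j => ?_⟩
  rw [dist_eq_norm, dist_eq_norm, dist_eq_norm]
  have ex : x i - x j = (x i - x 0) - (x j - x 0) := by abel
  have ey : y i - y j = (y i - y 0) - (y j - y 0) := by abel
  rw [ex, ey, cspi_expand (z i) (z j), cspi_expand (x i - x 0) (x j - x 0),
    cspi_expand (y i - y 0) (y j - y 0), hzin i i, hzin i j, hzin j j]
  ring


lemma cspi_sq_eq {a b : ℝ} (ha : 0 ≤ a) (hb : 0 ≤ b) (h : a ^ 2 = b ^ 2) : a = b := by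
  rw [← Real.sqrt_sq ha, ← Real.sqrt_sq hb, h]

lemma cspi_exists_isometry (u₁ u₂ w₁ w₂ : E3)
    (h11 : ⟪u₁, u₁⟫ = ⟪w₁, w₁⟫) (h12 : ⟪u₁, u₂⟫ = ⟪w₁, w₂⟫)
    (h22 : ⟪u₂, u₂⟫ = ⟪w₂, w₂⟫) :
    ∃ T : E3 →ₗᵢ[ℝ] E3, T u₁ = w₁ ∧ T u₂ = w₂ := by
  let B : (Fin 2 → ℝ) →ₗ[ℝ] E3 :=
    (LinearMap.proj 0).smulRight u₁ + (LinearMap.proj 1).smulRight u₂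
  let C : (Fin 2 → ℝ) →ₗ[ℝ] E3 :=
    (LinearMap.proj 0).smulRight w₁ + (LinearMap.proj 1).smulRight w₂
  have hBapp : ∀ x, B x = x 0 • u₁ + x 1 • u₂ := fun x => rfl
  have hCapp : ∀ x, C x = x 0 • w₁ + x 1 • w₂ := fun x => rfl
  have hnorm : ∀ x, ‖B x‖ = ‖C x‖ := by
    intro x
    have h2 : ‖B x‖ ^ 2 = ‖C x‖ ^ 2 := by
      rw [← real_inner_self_eq_norm_sq, ← real_inner_self_eq_norm_sq, hBapp, hCapp]
      simp only [inner_add_left, inner_add_right, real_inner_smul_left, real_inner_smul_right]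
      have h21 : ⟪u₂, u₁⟫ = ⟪w₂, w₁⟫ := by
        rw [show ⟪u₂, u₁⟫ = ⟪u₁, u₂⟫ from real_inner_comm _ _,
          show ⟪w₂, w₁⟫ = ⟪w₁, w₂⟫ from real_inner_comm _ _]
        exact h12
      rw [h11, h12, h21, h22]
    exact cspi_sq_eq (norm_nonneg _) (norm_nonneg _) h2
  have hker : LinearMap.ker B = LinearMap.ker C := by
    ext x
    rw [LinearMap.mem_ker, LinearMap.mem_ker, ← norm_eq_zero, hnorm x, norm_eq_zero]
  let e1 := B.quotKerEquivRange
  let e2 := Submodule.quotEquivOfEq _ _ hker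
  let e3 := C.quotKerEquivRange
  let g : (LinearMap.range B) →ₗ[ℝ] E3 :=
    (LinearMap.range C).subtype ∘ₗ e3.toLinearMap ∘ₗ e2.toLinearMap ∘ₗ e1.symm.toLinearMap
  have hg : ∀ x : Fin 2 → ℝ, g ⟨B x, LinearMap.mem_range_self B x⟩ = C x := by
    intro x
    have h1 : e1.symm ⟨B x, LinearMap.mem_range_self B x⟩ = Submodule.Quotient.mk x := by
      have h2 := B.quotKerEquivRange_symm_apply_image x (LinearMap.mem_range_self B x)
      exact h2
    simp only [g, LinearMap.coe_comp, Function.comp_apply, LinearEquiv.coe_coe, h1,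
      Submodule.coe_subtype]
    rw [Submodule.quotEquivOfEq_mk]
    exact C.quotKerEquivRange_apply_mk x
  have hgiso : ∀ y : LinearMap.range B, ‖g y‖ = ‖(y : E3)‖ := by
    rintro ⟨y, x, rfl⟩
    rw [hg x]
    exact (hnorm x).symm
  let L : (LinearMap.range B) →ₗᵢ[ℝ] E3 := ⟨g, hgiso⟩
  refine ⟨L.extend, ?_, ?_⟩
  · have hu : u₁ = B ![1, 0] := by rw [hBapp]; simp
    have : L.extend u₁ = L ⟨B ![1,0], LinearMap.mem_range_self B _⟩ := by
      conv_lhs => rw [hu]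
      exact L.extend_apply ⟨B ![1,0], LinearMap.mem_range_self B _⟩
    rw [this]
    show g _ = _
    rw [hg, hCapp]; simp
  · have hu : u₂ = B ![0, 1] := by rw [hBapp]; simp
    have : L.extend u₂ = L ⟨B ![0,1], LinearMap.mem_range_self B _⟩ := by
      conv_lhs => rw [hu]
      exact L.extend_apply ⟨B ![0,1], LinearMap.mem_range_self B _⟩
    rw [this]
    show g _ = _
    rw [hg, hCapp]; simp

lemma cspi_apex (z : Fin 4 → E3) (a b c : E3)
    (hab : dist a b = dist (z 0) (z 1))
    (hac : dist a c = dist (z 0) (z 2))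
    (hbc : dist b c = dist (z 1) (z 2)) :
    ∃ d : E3, dist a d = dist (z 0) (z 3) ∧ dist b d = dist (z 1) (z 3) ∧
      dist c d = dist (z 2) (z 3) := by
  have hnab : ‖z 1 - z 0‖ = ‖b - a‖ := by
    rw [← dist_eq_norm, ← dist_eq_norm, dist_comm (z 1), dist_comm b, hab]
  have hnac : ‖z 2 - z 0‖ = ‖c - a‖ := by
    rw [← dist_eq_norm, ← dist_eq_norm, dist_comm (z 2), dist_comm c, hac]
  have hnbc : ‖(z 1 - z 0) - (z 2 - z 0)‖ = ‖(b - a) - (c - a)‖ := by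
    have h1 : (z 1 - z 0) - (z 2 - z 0) = z 1 - z 2 := by abel
    have h2 : (b - a) - (c - a) = b - c := by abel
    rw [h1, h2, ← dist_eq_norm, ← dist_eq_norm, hbc]
  have key : ∀ p q r s : E3, ‖p‖ = ‖r‖ → ‖q‖ = ‖s‖ → ‖p - q‖ = ‖r - s‖ →
      ⟪p, q⟫ = ⟪r, s⟫ := by
    intro p q r s h1 h2 h3
    have e1 := cspi_expand p q
    have e2 := cspi_expand r s
    rw [real_inner_self_eq_norm_sq, real_inner_self_eq_norm_sq] at e1 e2
    have h3' : ‖p - q‖ ^ 2 = ‖r - s‖ ^ 2 := by rw [h3]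
    rw [e1, e2, h1, h2] at h3'
    linarith
  obtain ⟨T, hT1, hT2⟩ := cspi_exists_isometry (z 1 - z 0) (z 2 - z 0) (b - a) (c - a)
    (by rw [real_inner_self_eq_norm_sq, real_inner_self_eq_norm_sq, hnab])
    (key _ _ _ _ hnab hnac hnbc)
    (by rw [real_inner_self_eq_norm_sq, real_inner_self_eq_norm_sq, hnac])
  refine ⟨a + T (z 3 - z 0), ?_, ?_, ?_⟩
  · rw [dist_eq_norm]
    have : a - (a + T (z 3 - z 0)) = -(T (z 3 - z 0)) := by abel
    rw [this, norm_neg, T.norm_map, ← dist_eq_norm, dist_comm]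
  · rw [dist_eq_norm]
    have : b - (a + T (z 3 - z 0)) = (b - a) - T (z 3 - z 0) := by abel
    rw [this, ← hT1, ← T.map_sub, T.norm_map]
    have h4 : (z 1 - z 0) - (z 3 - z 0) = z 1 - z 3 := by abel
    rw [h4, ← dist_eq_norm]
  · rw [dist_eq_norm]
    have : c - (a + T (z 3 - z 0)) = (c - a) - T (z 3 - z 0) := by abel
    rw [this, ← hT2, ← T.map_sub, T.norm_map]
    have h4 : (z 2 - z 0) - (z 3 - z 0) = z 2 - z 3 := by abel
    rw [h4, ← dist_eq_norm]

end

end CSPIAux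

/-- One-parameter-at-a-time form of the convex chart theorem: fixing the
lengths of all edges of a complete 3-tree except one edge `f₀ ∈ F`, the set of
realizable lengths of `f₀` is an interval (a convex subset of `ℝ`). -/
theorem cayley_single_parameter_interval
    {V : Type*} [Fintype V] (G : SimpleGraph V)
    (hcard : 3 ≤ Fintype.card V) (hG : IsComplete3Tree G)
    (H F : Set (Sym2 V)) (hunion : H ∪ F = G.edgeSet) (hdisj : Disjoint H F)
    (lH : H → ℝ≥0) (f₀ : Sym2 V) (hf₀ : f₀ ∈ F)
    (l : (F \ {f₀} : Set (Sym2 V)) → ℝ≥0) :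
    Convex ℝ {t : ℝ |
      0 ≤ t ∧
      ∃ p : V → EuclideanSpace ℝ (Fin 3),
        (∀ (x y : V) (h : s(x, y) ∈ H),
          dist (p x) (p y) = (lH ⟨s(x, y), h⟩ : ℝ)) ∧
        (∀ (x y : V) (h : s(x, y) ∈ (F \ {f₀} : Set (Sym2 V))),
          dist (p x) (p y) = (l ⟨s(x, y), h⟩ : ℝ)) ∧
        (∀ x y : V, s(x, y) = f₀ → dist (p x) (p y) = t)} := by
  classical
  intro t₁ ht₁ t₂ ht₂ θ₁ θ₂ hθ₁ hθ₂ hθsum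
  obtain ⟨ht₁0, p₁, h₁H, h₁F, h₁f⟩ := ht₁
  obtain ⟨ht₂0, p₂, h₂H, h₂F, h₂f⟩ := ht₂
  simp only [Set.mem_setOf_eq, smul_eq_mul]
  set t : ℝ := θ₁ * t₁ + θ₂ * t₂ with hts
  have ht0 : 0 ≤ t := by positivity
  -- the target length function
  set ℓ : ℝ → Sym2 V → ℝ := fun s e =>
    if h : e ∈ H then (lH ⟨e, h⟩ : ℝ)
    else if h' : e ∈ (F \ {f₀} : Set (Sym2 V)) then (l ⟨e, h'⟩ : ℝ) else s with hℓ
  have hf₀H : f₀ ∉ H := fun hh => Set.disjoint_left.mp hdisj hh hf₀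
  have hℓf₀ : ∀ s, ℓ s f₀ = s := by
    intro s; simp [hℓ, hf₀H]
  have hℓH : ∀ s e (h : e ∈ H), ℓ s e = (lH ⟨e, h⟩ : ℝ) := by
    intro s e h; simp [hℓ, h]
  have hℓF : ∀ s e (h : e ∈ (F \ {f₀} : Set (Sym2 V))), ℓ s e = (l ⟨e, h⟩ : ℝ) := by
    intro s e h
    have heH : e ∉ H := fun hh => Set.disjoint_left.mp hdisj hh h.1
    simp only [hℓ]
    rw [dif_neg heH, dif_pos h]
  have hℓpos : ∀ s, 0 ≤ s → ∀ e, 0 ≤ ℓ s e := by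
    intro s hs e
    by_cases h : e ∈ H
    · rw [hℓH s e h]; exact (lH _).2
    · by_cases h' : e ∈ (F \ {f₀} : Set (Sym2 V))
      · rw [hℓF s e h']; exact (l _).2
      · simp only [hℓ]
        rw [dif_neg h, dif_neg h']
        exact hs
  -- satisfaction of all edge constraints
  have hsat : ∀ (p : V → EuclideanSpace ℝ (Fin 3)) (s : ℝ),
      (∀ x y (h : s(x, y) ∈ H), dist (p x) (p y) = (lH ⟨s(x, y), h⟩ : ℝ)) →
      (∀ x y (h : s(x, y) ∈ (F \ {f₀} : Set (Sym2 V))),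
        dist (p x) (p y) = (l ⟨s(x, y), h⟩ : ℝ)) →
      (∀ x y, s(x, y) = f₀ → dist (p x) (p y) = s) →
      ∀ u w, G.Adj u w → dist (p u) (p w) = ℓ s (s(u, w)) := by
    intro p s hHc hFc hfc u w hadj
    have he : s(u, w) ∈ H ∪ F := by rw [hunion]; exact G.mem_edgeSet.mpr hadj
    rcases he with h | h
    · rw [hℓH s _ h]; exact hHc u w h
    · by_cases hef : s(u, w) = f₀
      · rw [hef, hℓf₀]; exact hfc u w hef
      · have h' : s(u, w) ∈ (F \ {f₀} : Set (Sym2 V)) := ⟨h, by simpa using hef⟩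
        rw [hℓF s _ h']; exact hFc u w h'
  have hsat₁ := hsat p₁ t₁ h₁H h₁F h₁f
  have hsat₂ := hsat p₂ t₂ h₂H h₂F h₂f
  -- interpolation coefficients on squares
  have htseg : t ∈ Set.uIcc t₁ t₂ := by
    rw [← segment_eq_uIcc]
    exact ⟨θ₁, θ₂, hθ₁, hθ₂, hθsum, rfl⟩
  obtain ⟨μ, ν, hμ, hν, hμν, hμeq⟩ :
      ∃ μ ν : ℝ, 0 ≤ μ ∧ 0 ≤ ν ∧ μ + ν = 1 ∧ μ * t₁ ^ 2 + ν * t₂ ^ 2 = t ^ 2 := by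
    have htsq : t ^ 2 ∈ Set.uIcc (t₁ ^ 2) (t₂ ^ 2) := by
      rcases le_total t₁ t₂ with hle | hle
      · rw [Set.uIcc_of_le hle] at htseg
        rw [Set.uIcc_of_le (pow_le_pow_left₀ ht₁0 hle 2)]
        exact ⟨pow_le_pow_left₀ ht₁0 htseg.1 2,
          pow_le_pow_left₀ (le_trans ht₁0 htseg.1) htseg.2 2⟩
      · rw [Set.uIcc_of_ge hle] at htseg
        rw [Set.uIcc_of_ge (pow_le_pow_left₀ ht₂0 hle 2)]
        exact ⟨pow_le_pow_left₀ ht₂0 htseg.1 2,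
          pow_le_pow_left₀ (le_trans ht₂0 htseg.1) htseg.2 2⟩
    rw [← segment_eq_uIcc] at htsq
    obtain ⟨μ, ν, hμ, hν, hμν, heq⟩ := htsq
    exact ⟨μ, ν, hμ, hν, hμν, by simpa [smul_eq_mul] using heq⟩
  -- the key pointwise interpolation identity
  have hW : ∀ u w, G.Adj u w →
      μ * (ℓ t₁ (s(u, w))) ^ 2 + ν * (ℓ t₂ (s(u, w))) ^ 2 = (ℓ t (s(u, w))) ^ 2 := by
    intro u w hadj
    by_cases hef : s(u, w) = f₀
    · rw [hef, hℓf₀, hℓf₀, hℓf₀]; exact hμeq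
    · have he : s(u, w) ∈ H ∪ F := by rw [hunion]; exact G.mem_edgeSet.mpr hadj
      have hconst : ∀ s : ℝ, ℓ s (s(u, w)) = ℓ 0 (s(u, w)) := by
        intro s
        rcases he with h | h
        · rw [hℓH s _ h, hℓH 0 _ h]
        · have h' : s(u, w) ∈ (F \ {f₀} : Set (Sym2 V)) := ⟨h, by simpa using hef⟩
          rw [hℓF s _ h', hℓF 0 _ h']
      rw [hconst t₁, hconst t₂, hconst t]
      linear_combination (ℓ 0 (s(u, w))) ^ 2 * hμν
  obtain ⟨n, hn3, v, hbase, hstep⟩ := hG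
  have main : ∀ m : ℕ, 3 ≤ m → m ≤ n → ∃ p : V → EuclideanSpace ℝ (Fin 3),
      ∀ j k : Fin n, j.val < m → k.val < m → G.Adj (v j) (v k) →
        dist (p (v j)) (p (v k)) = ℓ t (s(v j, v k)) := by
    intro m hm3
    induction m, hm3 using Nat.le_induction with
    | base =>
      intro hmn
      set idx : Fin 4 → Fin n := fun r => ⟨min r.val 2, by omega⟩ with hidx
      obtain ⟨z, hzd⟩ := cspi_interp (fun r => p₁ (v (idx r))) (fun r => p₂ (v (idx r)))
        μ ν hμ hν
      have key : ∀ r s' : Fin 4, G.Adj (v (idx r)) (v (idx s')) →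
          dist (z r) (z s') = ℓ t (s(v (idx r), v (idx s'))) := by
        intro r s' hadj
        have hd2 : dist (z r) (z s') ^ 2 =
            μ * dist (p₁ (v (idx r))) (p₁ (v (idx s'))) ^ 2
            + ν * dist (p₂ (v (idx r))) (p₂ (v (idx s'))) ^ 2 := hzd r s'
        rw [hsat₁ _ _ hadj, hsat₂ _ _ hadj] at hd2
        have hsq : dist (z r) (z s') ^ 2 = (ℓ t (s(v (idx r), v (idx s')))) ^ 2 := by
          rw [hd2]; exact hW _ _ hadj
        exact cspi_sq_eq dist_nonneg (hℓpos t ht0 _) hsq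
      set F4 : Fin n → Fin 4 := fun j => ⟨min j.val 2, by omega⟩ with hF4
      have hidxF : ∀ jj : Fin n, jj.val < 3 → idx (F4 jj) = jj := by
        intro jj h
        apply Fin.ext
        simp only [hidx, hF4]
        omega
      refine ⟨fun w => z (F4 (v.symm w)), ?_⟩
      intro j k hj hk hadj
      simp only [Equiv.symm_apply_apply]
      have hadj' : G.Adj (v (idx (F4 j))) (v (idx (F4 k))) := by
        rw [hidxF j hj, hidxF k hk]; exact hadj
      have hres := key (F4 j) (F4 k) hadj'
      rw [hidxF j hj, hidxF k hk] at hres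
      exact hres
    | succ m hm3 ih =>
      intro hmn
      obtain ⟨p, hp⟩ := ih (by omega)
      have him : m < n := by omega
      set i : Fin n := ⟨m, him⟩ with hi
      have hvali : i.val = m := rfl
      obtain ⟨N, hN3, hNlt, hNiff, hNadj⟩ := hstep i hm3
      obtain ⟨a, b, c, hab, hac, hbc, hNeq⟩ := Finset.card_eq_three.mp hN3
      have haN : a ∈ N := by simp [hNeq]
      have hbN : b ∈ N := by simp [hNeq]
      have hcN : c ∈ N := by simp [hNeq]
      have hialt : a < i := hNlt a haN
      have hiblt : b < i := hNlt b hbN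
      have hiclt : c < i := hNlt c hcN
      have adjab : G.Adj (v a) (v b) := hNadj a haN b hbN hab
      have adjac : G.Adj (v a) (v c) := hNadj a haN c hcN hac
      have adjbc : G.Adj (v b) (v c) := hNadj b hbN c hcN hbc
      have adjia : G.Adj (v i) (v a) := (hNiff a hialt).mpr haN
      have adjib : G.Adj (v i) (v b) := (hNiff b hiblt).mpr hbN
      have adjic : G.Adj (v i) (v c) := (hNiff c hiclt).mpr hcN
      set idx : Fin 4 → Fin n := ![a, b, c, i] with hidx
      obtain ⟨z, hzd⟩ := cspi_interp (fun r => p₁ (v (idx r))) (fun r => p₂ (v (idx r)))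
        μ ν hμ hν
      have key : ∀ r s' : Fin 4, G.Adj (v (idx r)) (v (idx s')) →
          dist (z r) (z s') = ℓ t (s(v (idx r), v (idx s'))) := by
        intro r s' hadj
        have hd2 : dist (z r) (z s') ^ 2 =
            μ * dist (p₁ (v (idx r))) (p₁ (v (idx s'))) ^ 2
            + ν * dist (p₂ (v (idx r))) (p₂ (v (idx s'))) ^ 2 := hzd r s'
        rw [hsat₁ _ _ hadj, hsat₂ _ _ hadj] at hd2
        have hsq : dist (z r) (z s') ^ 2 = (ℓ t (s(v (idx r), v (idx s')))) ^ 2 := by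
          rw [hd2]; exact hW _ _ hadj
        exact cspi_sq_eq dist_nonneg (hℓpos t ht0 _) hsq
      have k01 : dist (z 0) (z 1) = ℓ t (s(v a, v b)) := key 0 1 adjab
      have k02 : dist (z 0) (z 2) = ℓ t (s(v a, v c)) := key 0 2 adjac
      have k12 : dist (z 1) (z 2) = ℓ t (s(v b, v c)) := key 1 2 adjbc
      have k03 : dist (z 0) (z 3) = ℓ t (s(v a, v i)) := key 0 3 adjia.symm
      have k13 : dist (z 1) (z 3) = ℓ t (s(v b, v i)) := key 1 3 adjib.symm
      have k23 : dist (z 2) (z 3) = ℓ t (s(v c, v i)) := key 2 3 adjic.symm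
      have hda : dist (p (v a)) (p (v b)) = dist (z 0) (z 1) := by
        rw [k01]; exact hp a b hialt hiblt adjab
      have hdb : dist (p (v a)) (p (v c)) = dist (z 0) (z 2) := by
        rw [k02]; exact hp a c hialt hiclt adjac
      have hdc : dist (p (v b)) (p (v c)) = dist (z 1) (z 2) := by
        rw [k12]; exact hp b c hiblt hiclt adjbc
      obtain ⟨d, hd0, hd1, hd2'⟩ := cspi_apex z (p (v a)) (p (v b)) (p (v c)) hda hdb hdc
      refine ⟨fun w => if w = v i then d else p w, ?_⟩
      intro j k hj hk hadj
      have hvne : ∀ jj : Fin n, jj ≠ i → v jj ≠ v i :=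
        fun jj h hv => h (v.injective hv)
      have hmain : ∀ jj : Fin n, jj < i → G.Adj (v i) (v jj) →
          dist d (p (v jj)) = ℓ t (s(v i, v jj)) := by
        intro jj hjj hadjj
        have hjN : jj ∈ N := (hNiff jj hjj).mp hadjj
        rw [hNeq] at hjN
        simp only [Finset.mem_insert, Finset.mem_singleton] at hjN
        rcases hjN with h | h | h
        · subst h
          rw [dist_comm, hd0, k03, Sym2.eq_swap]
        · subst h
          rw [dist_comm, hd1, k13, Sym2.eq_swap]
        · subst h
          rw [dist_comm, hd2', k23, Sym2.eq_swap]
      by_cases hjm : j.val < m <;> by_cases hkm : k.val < m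
      · have hji : j ≠ i := fun h => by rw [h, hvali] at hjm; omega
        have hki : k ≠ i := fun h => by rw [h, hvali] at hkm; omega
        simp only [if_neg (hvne j hji), if_neg (hvne k hki)]
        exact hp j k hjm hkm hadj
      · have hk_eq : k = i := Fin.ext (by rw [hvali]; omega)
        have hji : j ≠ i := fun h => by rw [h, hvali] at hjm; omega
        rw [hk_eq] at hadj ⊢
        simp only [if_pos rfl, if_neg (hvne j hji)]
        have hjlt : j < i := hjm
        rw [dist_comm, Sym2.eq_swap]
        exact hmain j hjlt hadj.symm
      · have hj_eq : j = i := Fin.ext (by rw [hvali]; omega)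
        have hki : k ≠ i := fun h => by rw [h, hvali] at hkm; omega
        rw [hj_eq] at hadj ⊢
        simp only [if_pos rfl, if_neg (hvne k hki)]
        have hklt : k < i := hkm
        exact hmain k hklt hadj
      · exfalso
        have hj_eq : j = i := Fin.ext (by rw [hvali]; omega)
        have hk_eq : k = i := Fin.ext (by rw [hvali]; omega)
        rw [hj_eq, hk_eq] at hadj
        exact G.irrefl hadj
  obtain ⟨p, hp⟩ := main n hn3 le_rfl
  have hsatp : ∀ u w, G.Adj u w → dist (p u) (p w) = ℓ t (s(u, w)) := by
    intro u w h
    have hres := hp (v.symm u) (v.symm w) (v.symm u).isLt (v.symm w).isLt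
      (by simpa using h)
    simpa using hres
  refine ⟨ht0, p, ?_, ?_, ?_⟩
  · intro x y h
    have hadj : G.Adj x y := G.mem_edgeSet.mp (by rw [← hunion]; exact Or.inl h)
    rw [hsatp x y hadj, hℓH t _ h]
  · intro x y h
    have hadj : G.Adj x y := G.mem_edgeSet.mp (by rw [← hunion]; exact Or.inr h.1)
    rw [hsatp x y hadj, hℓF t _ h]
  · intro x y h
    have hadj : G.Adj x y := G.mem_edgeSet.mp (by rw [← hunion, h]; exact Or.inr hf₀)
    rw [hsatp x y hadj, h, hℓf₀]
end

section
/- Let G = (V, E) be a complete 2-tree on a finite vertex set V with |V| ≥ 2, and let the edge set be partitioned as E = H ∪ F with H ∩ F = ∅. Fix lengths l_H : H → ℝ≥0. Then the set of all l_F : F → ℝ≥0 for which there exists a map p : V → EuclideanSpace ℝ (Fin 2) satisfying dist (p u) (p v) = l_H e for every edge e = {u,v} ∈ H and dist (p u) (p v) = l_F f for every edge f = {u,v} ∈ F, viewed as a subset of ℝ^F, is convex. -/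
open scoped NNReal


open Complex in
lemma apex_exists (P Q : ℂ) (a b : ℝ) (ha : 0 ≤ a) (hb : 0 ≤ b)
    (h1 : dist P Q ≤ a + b) (h2 : a ≤ dist P Q + b) (h3 : b ≤ dist P Q + a) :
    ∃ R : ℂ, dist R P = a ∧ dist R Q = b := by
  set c := dist P Q with hc
  have hc0 : 0 ≤ c := dist_nonneg
  rcases eq_or_lt_of_le hc0 with hc0' | hc0'
  · -- c = 0 : P = Q and a = b
    have hPQ : P = Q := by rw [← dist_eq_zero, ← hc]; linarith
    have hab : a = b := le_antisymm (by linarith) (by linarith)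
    have hkey : dist (P + (a : ℂ)) P = a := by
      rw [Complex.dist_eq]
      have : P + (a : ℂ) - P = (a : ℂ) := by ring
      rw [this, Complex.norm_real, Real.norm_eq_abs, _root_.abs_of_nonneg ha]
    exact ⟨P + (a : ℂ), hkey, by rw [← hPQ, hkey, hab]⟩
  · -- c > 0
    set x : ℝ := (a ^ 2 + c ^ 2 - b ^ 2) / (2 * c) with hx
    have h2c : (0:ℝ) < 2 * c := by linarith
    have hxc : 2 * c * x = a ^ 2 + c ^ 2 - b ^ 2 := by
      rw [hx, mul_div_cancel₀]; exact ne_of_gt h2c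
    have hub : a ^ 2 + c ^ 2 - b ^ 2 ≤ 2 * a * c := by nlinarith
    have hlb : -(2 * a * c) ≤ a ^ 2 + c ^ 2 - b ^ 2 := by nlinarith
    have hsq : (2 * c * x) ^ 2 ≤ (2 * a * c) ^ 2 := by
      rw [hxc]; exact sq_le_sq' hlb hub
    have hx2 : x ^ 2 ≤ a ^ 2 := by nlinarith [hsq, mul_pos hc0' hc0']
    set y : ℝ := Real.sqrt (a ^ 2 - x ^ 2) with hy
    have hy2 : y ^ 2 = a ^ 2 - x ^ 2 := Real.sq_sqrt (by linarith)
    set u : ℂ := (Q - P) / c with hu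
    have habsQP : ‖Q - P‖ = c := by
      rw [hc, dist_eq, norm_sub_rev]
    have habsu : ‖u‖ = 1 := by
      rw [hu, norm_div, habsQP]
      simp only [Complex.norm_real, Real.norm_eq_abs]
      rw [_root_.abs_of_pos hc0', div_self (ne_of_gt hc0')]
    have hcu : (c : ℂ) * u = Q - P := by
      rw [hu, mul_div_cancel₀]
      exact Complex.ofReal_ne_zero.mpr (ne_of_gt hc0')
    refine ⟨P + (x + y * Complex.I) * u, ?_, ?_⟩
    · rw [dist_eq]
      have h' : P + (x + y * Complex.I) * u - P = ((x : ℂ) + y * Complex.I) * u := by ring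
      rw [h', norm_mul, habsu, mul_one, Complex.norm_add_mul_I]
      rw [show x ^ 2 + y ^ 2 = a ^ 2 by linarith, Real.sqrt_sq ha]
    · rw [dist_eq]
      have h' : P + (x + y * Complex.I) * u - Q = ((↑(x - c) : ℂ) + y * Complex.I) * u := by
        push_cast
        linear_combination hcu
      rw [h', norm_mul, habsu, mul_one, Complex.norm_add_mul_I]
      rw [show (x - c) ^ 2 + y ^ 2 = b ^ 2 by nlinarith, Real.sqrt_sq hb]

lemma exists_realization {V : Type*} (G : SimpleGraph V) (n : ℕ) (hn : 2 ≤ n)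
    (v : Fin n ≃ V)
    (hbase : ∀ i j : Fin n, i.val < 2 → j.val < 2 → i ≠ j → G.Adj (v i) (v j))
    (hstep : ∀ i : Fin n, 2 ≤ i.val →
      ∃ N : Finset (Fin n), N.card = 2 ∧ (∀ j ∈ N, j < i) ∧
        (∀ j : Fin n, j < i → (G.Adj (v i) (v j) ↔ j ∈ N)) ∧
        (∀ j ∈ N, ∀ k ∈ N, j ≠ k → G.Adj (v j) (v k)))
    (L : Sym2 V → ℝ)
    (hnn : ∀ x y, G.Adj x y → 0 ≤ L s(x, y))
    (htri : ∀ x y z, G.Adj x y → G.Adj x z → G.Adj y z →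
      L s(x, y) ≤ L s(x, z) + L s(y, z)) :
    ∃ p : V → ℂ, ∀ x y, G.Adj x y → dist (p x) (p y) = L s(x, y) := by
  have hLsymm : ∀ x y : V, L s(x, y) = L s(y, x) := fun x y => by rw [Sym2.eq_swap]
  have key : ∀ m : ℕ, ∃ p : Fin n → ℂ, ∀ i j : Fin n, i.val < m → j.val < m →
      G.Adj (v i) (v j) → dist (p i) (p j) = L s(v i, v j) := by
    intro m
    induction m with
    | zero => exact ⟨fun _ => 0, fun i j hi _ _ => absurd hi (Nat.not_lt_zero _)⟩
    | succ m ih =>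
      obtain ⟨p, hp⟩ := ih
      by_cases hm : m < n
      swap
      · refine ⟨p, fun i j hi hj hadj => hp i j ?_ ?_ hadj⟩
        · exact lt_of_lt_of_le i.isLt (le_of_not_gt hm)
        · exact lt_of_lt_of_le j.isLt (le_of_not_gt hm)
      · match m, hm, hp with
        | 0, hm, hp =>
          refine ⟨fun _ => 0, fun i j hi hj hadj => ?_⟩
          have : i = j := Fin.ext (by omega)
          exact absurd hadj (this ▸ G.irrefl)
        | 1, hm, hp =>
          have h0n : 0 < n := by omega
          set z₀ : Fin n := ⟨0, h0n⟩ with hz₀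
          set z₁ : Fin n := ⟨1, hm⟩ with hz₁
          have hz10 : z₁ ≠ z₀ := by
            intro h
            exact absurd (congrArg Fin.val h) (by norm_num [hz₀, hz₁])
          have hadj01 : G.Adj (v z₀) (v z₁) := hbase z₀ z₁ (by norm_num [hz₀])
            (by norm_num [hz₁]) (Ne.symm hz10)
          refine ⟨fun idx => if idx = z₀ then 0 else (L s(v z₀, v z₁) : ℂ),
            fun i j hi hj hadj => ?_⟩
          have hne : i ≠ j := fun h => absurd hadj (h ▸ G.irrefl)
          have hvne : i.val ≠ j.val := fun h => hne (Fin.ext h)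
          have hd : dist (0 : ℂ) ((L s(v z₀, v z₁) : ℝ) : ℂ) = L s(v z₀, v z₁) := by
            rw [dist_comm, Complex.dist_eq]
            simp [abs_of_nonneg (hnn _ _ hadj01)]
          have hij : (i = z₀ ∧ j = z₁) ∨ (i = z₁ ∧ j = z₀) := by
            rcases (by omega : i.val = 0 ∧ j.val = 1 ∨ i.val = 1 ∧ j.val = 0) with
              ⟨h1, h2⟩ | ⟨h1, h2⟩
            · exact Or.inl ⟨Fin.ext h1, Fin.ext h2⟩
            · exact Or.inr ⟨Fin.ext h1, Fin.ext h2⟩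
          rcases hij with ⟨rfl, rfl⟩ | ⟨rfl, rfl⟩
          · show dist (if z₀ = z₀ then _ else _) (if z₁ = z₀ then _ else _) = _
            rw [if_pos (rfl : z₀ = z₀), if_neg hz10]
            exact hd
          · show dist (if z₁ = z₀ then _ else _) (if z₀ = z₀ then _ else _) = _
            rw [if_neg hz10, if_pos (rfl : z₀ = z₀), dist_comm, hd]
            exact hLsymm _ _
        | (m' + 2), hm, hp =>
          set i₀ : Fin n := ⟨m' + 2, hm⟩ with hi₀
          obtain ⟨N, hcard, hlt, hiff, hNadj⟩ := hstep i₀ (by simp [hi₀])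
          obtain ⟨j₁, k₁, hjk, hN⟩ := Finset.card_eq_two.mp hcard
          have hj₁N : j₁ ∈ N := by rw [hN]; simp
          have hk₁N : k₁ ∈ N := by rw [hN]; simp
          have hj₁lt : j₁ < i₀ := hlt _ hj₁N
          have hk₁lt : k₁ < i₀ := hlt _ hk₁N
          have hj₁v : j₁.val < m' + 2 := hj₁lt
          have hk₁v : k₁.val < m' + 2 := hk₁lt
          have haj : G.Adj (v i₀) (v j₁) := (hiff _ hj₁lt).mpr hj₁N
          have hak : G.Adj (v i₀) (v k₁) := (hiff _ hk₁lt).mpr hk₁N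
          have hajk : G.Adj (v j₁) (v k₁) := hNadj _ hj₁N _ hk₁N hjk
          have hdjk : dist (p j₁) (p k₁) = L s(v j₁, v k₁) := hp _ _ hj₁v hk₁v hajk
          have h1 : dist (p j₁) (p k₁) ≤ L s(v i₀, v j₁) + L s(v i₀, v k₁) := by
            rw [hdjk]
            have := htri (v j₁) (v k₁) (v i₀) hajk haj.symm hak.symm
            rw [hLsymm (v j₁) (v i₀), hLsymm (v k₁) (v i₀)] at this
            linarith
          have h2 : L s(v i₀, v j₁) ≤ dist (p j₁) (p k₁) + L s(v i₀, v k₁) := by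
            rw [hdjk]
            have := htri (v i₀) (v j₁) (v k₁) haj hak hajk
            linarith
          have h3 : L s(v i₀, v k₁) ≤ dist (p j₁) (p k₁) + L s(v i₀, v j₁) := by
            rw [hdjk]
            have := htri (v i₀) (v k₁) (v j₁) hak haj hajk.symm
            rw [hLsymm (v k₁) (v j₁)] at this
            linarith
          obtain ⟨R, hRj, hRk⟩ := apex_exists (p j₁) (p k₁) (L s(v i₀, v j₁))
            (L s(v i₀, v k₁)) (hnn _ _ haj) (hnn _ _ hak) h1 h2 h3
          refine ⟨Function.update p i₀ R, fun i j hi hj hadj => ?_⟩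
          have key2 : ∀ j' : Fin n, j'.val < m' + 2 → G.Adj (v i₀) (v j') →
              dist (Function.update p i₀ R i₀) (Function.update p i₀ R j') =
                L s(v i₀, v j') := by
            intro j' hj' hadj'
            have hj'lt : j' < i₀ := hj'
            have hj'ne : j' ≠ i₀ := ne_of_lt hj'lt
            rw [Function.update_self, Function.update_of_ne hj'ne]
            have hmem : j' ∈ N := (hiff _ hj'lt).mp hadj'
            rw [hN, Finset.mem_insert, Finset.mem_singleton] at hmem
            rcases hmem with rfl | rfl
            · exact hRj
            · exact hRk
          by_cases hii : i = i₀
          · subst hii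
            by_cases hjj : j = i₀
            · exact absurd hadj (hjj ▸ G.irrefl)
            · have hjv : j.val ≠ m' + 2 := fun h => hjj (Fin.ext h)
              exact key2 j (by omega) hadj
          · by_cases hjj : j = i₀
            · subst hjj
              have hiv : i.val ≠ m' + 2 := fun h => hii (Fin.ext h)
              rw [dist_comm, hLsymm]
              exact key2 i (by omega) hadj.symm
            · have hiv : i.val ≠ m' + 2 := fun h => hii (Fin.ext h)
              have hjv : j.val ≠ m' + 2 := fun h => hjj (Fin.ext h)
              rw [Function.update_of_ne hii, Function.update_of_ne hjj]
              exact hp i j (by omega) (by omega) hadj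
  obtain ⟨p, hp⟩ := key n
  refine ⟨p ∘ v.symm, fun x y hadj => ?_⟩
  have := hp (v.symm x) (v.symm y) (Fin.isLt _) (Fin.isLt _)
    (by simpa using hadj)
  simpa using this

def IsComplete2Tree {V : Type*} [Fintype V] (G : SimpleGraph V) : Prop :=
  ∃ (n : ℕ) (_ : 2 ≤ n) (v : Fin n ≃ V),
    (∀ i j : Fin n, i.val < 2 → j.val < 2 → i ≠ j → G.Adj (v i) (v j)) ∧
    ∀ i : Fin n, 2 ≤ i.val →
      ∃ N : Finset (Fin n), N.card = 2 ∧ (∀ j ∈ N, j < i) ∧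
        (∀ j : Fin n, j < i → (G.Adj (v i) (v j) ↔ j ∈ N)) ∧
        (∀ j ∈ N, ∀ k ∈ N, j ≠ k → G.Adj (v j) (v k))

/-- The 2-dimensional analog of the convex Cayley chart theorem: the Cayley
configuration space of a complete 2-tree, with realizations in the Euclidean
plane, viewed as a subset of `ℝ^F`, is convex. -/
theorem cayley_configuration_space_convex_two_tree
    {V : Type*} [Fintype V] (G : SimpleGraph V)
    (hcard : 2 ≤ Fintype.card V) (hG : IsComplete2Tree G)
    (H F : Set (Sym2 V)) (hunion : H ∪ F = G.edgeSet) (hdisj : Disjoint H F)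
    (lH : H → ℝ≥0) :
    Convex ℝ {lF : F → ℝ |
      (∀ f, 0 ≤ lF f) ∧
      ∃ p : V → EuclideanSpace ℝ (Fin 2),
        (∀ (x y : V) (h : s(x, y) ∈ H),
          dist (p x) (p y) = (lH ⟨s(x, y), h⟩ : ℝ)) ∧
        (∀ (x y : V) (h : s(x, y) ∈ F),
          dist (p x) (p y) = lF ⟨s(x, y), h⟩)} := by
  classical
  obtain ⟨n, hn, v, hbase, hstep⟩ := hG
  intro lF1 hm1 lF2 hm2 t s ht hs hts
  obtain ⟨hnn1, p1, hH1, hF1⟩ := hm1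
  obtain ⟨hnn2, p2, hH2, hF2⟩ := hm2
  -- the combined edge-length function
  set L : Sym2 V → ℝ := fun e =>
    if h : e ∈ H then (lH ⟨e, h⟩ : ℝ)
    else if h : e ∈ F then t * lF1 ⟨e, h⟩ + s * lF2 ⟨e, h⟩ else 0 with hLdef
  have hLcomb : ∀ x y : V, G.Adj x y →
      L s(x, y) = t * dist (p1 x) (p1 y) + s * dist (p2 x) (p2 y) := by
    intro x y hadj
    have hedge : s(x, y) ∈ H ∪ F := by
      rw [hunion]; exact hadj
    rcases hedge with h | h
    · simp only [hLdef, dif_pos h]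
      rw [hH1 x y h, hH2 x y h, ← add_mul, hts, one_mul]
    · have hnH : s(x, y) ∉ H := fun h' => Set.disjoint_left.mp hdisj h' h
      simp only [hLdef, dif_neg hnH, dif_pos h]
      rw [hF1 x y h, hF2 x y h]
  have hnnL : ∀ x y : V, G.Adj x y → 0 ≤ L s(x, y) := by
    intro x y hadj
    rw [hLcomb x y hadj]
    have := dist_nonneg (x := p1 x) (y := p1 y)
    have := dist_nonneg (x := p2 x) (y := p2 y)
    positivity
  have htriL : ∀ x y z : V, G.Adj x y → G.Adj x z → G.Adj y z →
      L s(x, y) ≤ L s(x, z) + L s(y, z) := by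
    intro x y z hxy hxz hyz
    rw [hLcomb x y hxy, hLcomb x z hxz, hLcomb y z hyz]
    have t1 : dist (p1 x) (p1 y) ≤ dist (p1 x) (p1 z) + dist (p1 y) (p1 z) := by
      rw [dist_comm (p1 y) (p1 z)]; exact dist_triangle _ _ _
    have t2 : dist (p2 x) (p2 y) ≤ dist (p2 x) (p2 z) + dist (p2 y) (p2 z) := by
      rw [dist_comm (p2 y) (p2 z)]; exact dist_triangle _ _ _
    nlinarith [mul_le_mul_of_nonneg_left t1 ht, mul_le_mul_of_nonneg_left t2 hs]
  obtain ⟨q, hq⟩ := exists_realization G n hn v hbase hstep L hnnL htriL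
  set e : ℂ ≃ₗᵢ[ℝ] EuclideanSpace ℝ (Fin 2) :=
    Complex.isometryOfOrthonormal (EuclideanSpace.basisFun (Fin 2) ℝ) with he
  refine ⟨fun f => ?_, fun x' => e (q x'), ?_, ?_⟩
  · have := hnn1 f; have := hnn2 f
    simp only [Pi.add_apply, Pi.smul_apply, smul_eq_mul]
    positivity
  · intro x y h
    have hadj : G.Adj x y := by
      rw [← SimpleGraph.mem_edgeSet, ← hunion]; exact Or.inl h
    rw [e.dist_map, hq x y hadj]
    simp only [hLdef, dif_pos h]
  · intro x y h
    have hadj : G.Adj x y := by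
      rw [← SimpleGraph.mem_edgeSet, ← hunion]; exact Or.inr h
    have hnH : s(x, y) ∉ H := fun h' => Set.disjoint_left.mp hdisj h' h
    rw [e.dist_map, hq x y hadj]
    simp only [hLdef, dif_neg hnH, dif_pos h, Pi.add_apply, Pi.smul_apply, smul_eq_mul]
end

section
/- Let c₁, c₂, c₃ be three affinely independent points in EuclideanSpace ℝ (Fin 3) and let r₁, r₂, r₃ ≥ 0. Then the set of points x ∈ EuclideanSpace ℝ (Fin 3) with dist x cᵢ = rᵢ for i = 1, 2, 3 has at most two elements. -/
open Submodule Module FiniteDimensional RealInnerProductSpace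

private lemma aux_no_three
    (c₁ c₂ c₃ : EuclideanSpace ℝ (Fin 3))
    (hindep : AffineIndependent ℝ ![c₁, c₂, c₃])
    {p q s : EuclideanSpace ℝ (Fin 3)}
    (hpq : p ≠ q) (hps : p ≠ s) (hqs : q ≠ s)
    (h₁ : dist p c₁ = dist q c₁ ∧ dist p c₂ = dist q c₂ ∧ dist p c₃ = dist q c₃)
    (h₂ : dist p c₁ = dist s c₁ ∧ dist p c₂ = dist s c₂ ∧ dist p c₃ = dist s c₃) :
    False := by
  classical
  set V : Submodule ℝ (EuclideanSpace ℝ (Fin 3)) :=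
    vectorSpan ℝ (Set.range ![c₁, c₂, c₃]) with hV
  -- distances from any center are equal for p, q and for p, s
  have hdq : ∀ i : Fin 3, dist p (![c₁, c₂, c₃] i) = dist q (![c₁, c₂, c₃] i) := by
    intro i; fin_cases i
    · exact h₁.1
    · exact h₁.2.1
    · exact h₁.2.2
  have hds : ∀ i : Fin 3, dist p (![c₁, c₂, c₃] i) = dist s (![c₁, c₂, c₃] i) := by
    intro i; fin_cases i
    · exact h₂.1
    · exact h₂.2.1
    · exact h₂.2.2
  -- q - p and s - p lie in Vᗮ
  have hmem : ∀ x : EuclideanSpace ℝ (Fin 3),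
      (∀ i : Fin 3, dist p (![c₁, c₂, c₃] i) = dist x (![c₁, c₂, c₃] i)) → x - p ∈ Vᗮ := by
    intro x hx
    rw [Submodule.mem_orthogonal]
    intro y hy
    rw [hV, vectorSpan_def] at hy
    refine Submodule.span_induction ?_ ?_ ?_ ?_ hy
    · rintro _ ⟨a, ⟨i, rfl⟩, b, ⟨j, rfl⟩, rfl⟩
      have h0 : (inner ℝ ((![c₁, c₂, c₃] i) -ᵥ (![c₁, c₂, c₃] j)) (x -ᵥ p) : ℝ) = 0 :=
        EuclideanGeometry.inner_vsub_vsub_of_dist_eq_of_dist_eq (hx j) (hx i)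
      simpa [vsub_eq_sub] using h0
    · simp
    · intro a b _ _ ha hb; rw [inner_add_left, ha, hb, add_zero]
    · intro t a _ ha; rw [real_inner_smul_left, ha, mul_zero]
  have hq : q - p ∈ Vᗮ := hmem q hdq
  have hs : s - p ∈ Vᗮ := hmem s hds
  -- dimension count
  have hVdim : finrank ℝ V = 2 := by
    have := hindep.finrank_vectorSpan (by simp : Fintype.card (Fin 3) = 2 + 1)
    simpa [hV] using this
  have htot : finrank ℝ (EuclideanSpace ℝ (Fin 3)) = 3 := by simp
  have hperp : finrank ℝ Vᗮ = 1 := by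
    have h := Submodule.finrank_add_finrank_orthogonal V
    omega
  have huq : q - p ≠ 0 := sub_ne_zero.mpr (Ne.symm hpq)
  have hspan : (ℝ ∙ (q - p)) = Vᗮ := by
    apply Submodule.eq_of_le_of_finrank_eq
    · rwa [Submodule.span_singleton_le_iff_mem]
    · rw [finrank_span_singleton huq, hperp]
  obtain ⟨t, ht⟩ := Submodule.mem_span_singleton.mp (hspan ▸ hs)
  -- quadratic argument: points on a sphere on a line
  set a := p - c₁ with ha
  set u := q - p with hu
  have hna : ‖a‖ = ‖a + u‖ := by
    have h := h₁.1
    rw [dist_eq_norm, dist_eq_norm] at h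
    have e : a + u = q - c₁ := by rw [ha, hu]; abel
    rw [e, ha]; exact h
  have hns : ‖a‖ = ‖a + t • u‖ := by
    have h := h₂.1
    rw [dist_eq_norm, dist_eq_norm] at h
    have e : a + t • u = s - c₁ := by rw [ha, ht]; abel
    rw [e, ha]; exact h
  have e1 : 2 * (inner ℝ a u : ℝ) + ‖u‖ ^ 2 = 0 := by
    have h := congrArg (· ^ 2) hna
    rw [norm_add_sq_real] at h
    linarith
  have habs : ‖t • u‖ ^ 2 = t ^ 2 * ‖u‖ ^ 2 := by
    rw [norm_smul, mul_pow, Real.norm_eq_abs, sq_abs]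
  have e2 : 2 * t * (inner ℝ a u : ℝ) + t ^ 2 * ‖u‖ ^ 2 = 0 := by
    have h := congrArg (· ^ 2) hns
    rw [norm_add_sq_real, real_inner_smul_right, habs] at h
    linarith
  have hu2 : (0:ℝ) < ‖u‖ ^ 2 := pow_pos (norm_pos_iff.mpr huq) 2
  have hip : (inner ℝ a u : ℝ) = -‖u‖ ^ 2 / 2 := by linarith
  have ht01 : t * (t - 1) * ‖u‖ ^ 2 = 0 := by rw [hip] at e2; ring_nf at e2 ⊢; linarith
  have htt : t = 0 ∨ t = 1 := by
    rcases mul_eq_zero.mp ht01 with h | h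
    · rcases mul_eq_zero.mp h with h | h
      · exact Or.inl h
      · exact Or.inr (by linarith)
    · exact absurd h (ne_of_gt hu2)
  rcases htt with rfl | rfl
  · apply hps
    have h0 : s - p = 0 := by rw [← ht]; simp
    exact (sub_eq_zero.mp h0).symm
  · apply hqs
    have h0 : q - p = s - p := by rw [← ht, hu]; simp
    exact sub_left_injective h0

/-- Three spheres in `ℝ³` with affinely independent (non-collinear) centers
intersect in at most two points. -/
theorem three_sphere_intersection_at_most_two
    (c₁ c₂ c₃ : EuclideanSpace ℝ (Fin 3))
    (hindep : AffineIndependent ℝ ![c₁, c₂, c₃])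
    (r₁ r₂ r₃ : ℝ) (hr₁ : 0 ≤ r₁) (hr₂ : 0 ≤ r₂) (hr₃ : 0 ≤ r₃) :
    {x : EuclideanSpace ℝ (Fin 3) |
      dist x c₁ = r₁ ∧ dist x c₂ = r₂ ∧ dist x c₃ = r₃}.encard ≤ 2 := by
  by_contra h
  rw [not_le] at h
  have h3 : (3 : ℕ∞) ≤ _ := Order.add_one_le_of_lt h
  obtain ⟨T, hT, hT3⟩ := Set.exists_subset_encard_eq h3
  obtain ⟨x, y, z, hxy, hxz, hyz, rfl⟩ := Set.encard_eq_three.mp hT3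
  have hx := hT (by simp : x ∈ ({x, y, z} : Set _))
  have hy := hT (by simp : y ∈ ({x, y, z} : Set _))
  have hz := hT (by simp : z ∈ ({x, y, z} : Set _))
  exact aux_no_three c₁ c₂ c₃ hindep hxy hxz hyz
    ⟨hx.1.trans hy.1.symm, hx.2.1.trans hy.2.1.symm, hx.2.2.trans hy.2.2.symm⟩
    ⟨hx.1.trans hz.1.symm, hx.2.1.trans hz.2.1.symm, hx.2.2.trans hz.2.2.symm⟩
end

section
/- Let G = (V, E) be a complete 3-tree on n ≥ 3 vertices with ordering v₁,…,vₙ as in the definition, let l : E → ℝ≥0 be edge lengths, and fix three points q₁, q₂, q₃ ∈ EuclideanSpace ℝ (Fin 3). Then the set of realizations p : V → EuclideanSpace ℝ (Fin 3) of the linkage (G, l) such that p vⱼ = qⱼ for j = 1, 2, 3 and such that, for every i ≥ 4, the images under p of the three earlier neighbors of vᵢ are affinely independent, is a finite set with at most 2^(n−3) elements. -/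
open scoped NNReal RealInnerProductSpace

lemma inner_key {E : Type*} [NormedAddCommGroup E] [InnerProductSpace ℝ E]
    {s t c : E} (h : dist s c = dist t c) :
    ⟪s - t, s + t - (2:ℝ) • c⟫ = (0:ℝ) := by
  have h' : ‖s - c‖ = ‖t - c‖ := by rwa [dist_eq_norm, dist_eq_norm] at h
  have h2 : ⟪s - c, s - c⟫ = ⟪t - c, t - c⟫ := by
    rw [real_inner_self_eq_norm_sq, real_inner_self_eq_norm_sq, h']
  simp only [inner_sub_left, inner_sub_right, inner_add_right, inner_smul_right,
    real_inner_comm s t, real_inner_comm s c, real_inner_comm t c] at h2 ⊢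
  linarith

lemma sphere_unique (a : Fin 3 → EuclideanSpace ℝ (Fin 3))
    (ha : AffineIndependent ℝ a) (r : Fin 3 → ℝ)
    {x y z : EuclideanSpace ℝ (Fin 3)}
    (hx : ∀ i, dist x (a i) = r i) (hy : ∀ i, dist y (a i) = r i)
    (hz : ∀ i, dist z (a i) = r i) (hxy : x ≠ y) (hxz : x ≠ z) : y = z := by
  classical
  -- linear independence of the two difference vectors
  have hli : LinearIndependent ℝ ![a 1 - a 0, a 2 - a 0] := by
    have h1 := (affineIndependent_iff_linearIndependent_vsub ℝ a 0).1 ha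
    have hg : Function.Injective (![⟨1, by decide⟩, ⟨2, by decide⟩] :
        Fin 2 → {i : Fin 3 // i ≠ 0}) := by decide
    have := h1.comp _ hg
    convert this using 1
    funext i
    fin_cases i <;> simp [vsub_eq_sub]
    rfl
  set K : Submodule ℝ (EuclideanSpace ℝ (Fin 3)) := Submodule.span ℝ (Set.range ![a 1 - a 0, a 2 - a 0]) with hK
  have hfinK : Module.finrank ℝ K = 2 := by
    rw [hK, finrank_span_eq_card hli]
    simp
  have hfinKo : Module.finrank ℝ Kᗮ = 1 := by
    have := K.finrank_add_finrank_orthogonal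
    rw [hfinK, finrank_euclideanSpace_fin] at this
    omega
  -- perpendicularity of differences of solutions
  have hperp : ∀ s t : EuclideanSpace ℝ (Fin 3), (∀ i, dist s (a i) = r i) → (∀ i, dist t (a i) = r i) →
      s - t ∈ Kᗮ := by
    intro s t hs ht
    have key : ∀ i, ⟪s - t, s + t - (2:ℝ) • a i⟫ = (0:ℝ) := fun i =>
      inner_key (by rw [hs i, ht i])
    have keydiff : ∀ i j : Fin 3, ⟪a i - a j, s - t⟫ = (0:ℝ) := by
      intro i j
      have := key i
      have h2 := key j
      simp only [inner_sub_right, inner_add_right, inner_smul_right] at this h2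
      rw [real_inner_comm]
      simp only [inner_sub_right]
      linarith
    rw [Submodule.mem_orthogonal]
    intro u hu
    induction hu using Submodule.span_induction with
    | mem u hu =>
        obtain ⟨i, rfl⟩ := hu
        fin_cases i
        · exact keydiff 1 0
        · exact keydiff 2 0
    | zero => simp
    | add u w _ _ h1 h2 => rw [inner_add_left, h1, h2, add_zero]
    | smul c u _ h1 => rw [inner_smul_left, h1, mul_zero]
  have hu : x - y ∈ Kᗮ := hperp x y hx hy
  have hw : x - z ∈ Kᗮ := hperp x z hx hz
  -- rank-one: x - z = t • (x - y)
  obtain ⟨⟨v0, hv0K⟩, hv0ne, hgen⟩ := finrank_eq_one_iff'.1 hfinKo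
  obtain ⟨c1, hc1⟩ := hgen ⟨x - y, hu⟩
  obtain ⟨c2, hc2⟩ := hgen ⟨x - z, hw⟩
  have hc1' : c1 • v0 = x - y := congrArg Subtype.val hc1
  have hc2' : c2 • v0 = x - z := congrArg Subtype.val hc2
  have hc1ne : c1 ≠ 0 := by
    rintro rfl
    rw [zero_smul] at hc1'
    exact hxy (by rwa [eq_comm, sub_eq_zero] at hc1')
  have hxz' : x - z = (c2 / c1) • (x - y) := by
    rw [← hc1', ← hc2', smul_smul, div_mul_cancel₀ _ hc1ne]
  set t : ℝ := c2 / c1 with ht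
  have htne : t ≠ 0 := by
    intro h
    have h0 : x - z = 0 := by rw [hxz', h, zero_smul]
    exact hxz (sub_eq_zero.1 h0)
  -- the two balance equations
  have e1 : ⟪x - y, x + y - (2:ℝ) • a 0⟫ = (0:ℝ) :=
    inner_key (by rw [hx 0, hy 0])
  have e2 : ⟪x - z, x + z - (2:ℝ) • a 0⟫ = (0:ℝ) :=
    inner_key (by rw [hx 0, hz 0])
  rw [hxz', inner_smul_left, RCLike.conj_to_real] at e2
  have e2' : ⟪x - y, x + z - (2:ℝ) • a 0⟫ = (0:ℝ) := by
    rcases mul_eq_zero.1 e2 with h | h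
    · exact absurd h htne
    · exact h
  have e3 : ⟪x - y, y - z⟫ = (0:ℝ) := by
    have : ⟪x - y, (x + y - (2:ℝ) • a 0) - (x + z - (2:ℝ) • a 0)⟫ = (0:ℝ) := by
      rw [inner_sub_right, e1, e2', sub_zero]
    convert this using 2
    abel
  have hyz : y - z = (t - 1) • (x - y) := by
    have : y - z = (x - z) - (x - y) := by abel
    rw [this, hxz', sub_smul, one_smul]
  have hfin : ⟪y - z, y - z⟫ = (0:ℝ) := by
    calc ⟪y - z, y - z⟫ = ⟪(t - 1) • (x - y), y - z⟫ := by rw [← hyz]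
    _ = (t - 1) * ⟪x - y, y - z⟫ := by
        rw [inner_smul_left, RCLike.conj_to_real]
    _ = 0 := by rw [e3, mul_zero]
  have := inner_self_eq_zero.1 hfin
  rwa [sub_eq_zero] at this

open Classical in
noncomputable def pick3 (s : Set (EuclideanSpace ℝ (Fin 3))) : EuclideanSpace ℝ (Fin 3) :=
  if h : s.Nonempty then h.choose else 0

lemma pick3_mem {s : Set (EuclideanSpace ℝ (Fin 3))} (h : s.Nonempty) : pick3 s ∈ s := by
  classical
  simp only [pick3, dif_pos h]
  exact h.choose_spec

/-- A complete 3-tree linkage, with the base triangle pinned down and all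
sequentially placed tetrahedra nondegenerate, has at most `2 ^ (n - 3)`
realizations in `ℝ³`. Here `v : Fin n ≃ V` is the 3-tree ordering of the
vertices and `N i` is the set of earlier neighbors of the `i`-th vertex. -/
theorem complete3Tree_realizations_finite
    {V : Type*} [Fintype V] {n : ℕ} (hn : 3 ≤ n)
    (G : SimpleGraph V) (v : Fin n ≃ V) (N : Fin n → Finset (Fin n))
    (htri : ∀ i j : Fin n, i.val < 3 → j.val < 3 → i ≠ j → G.Adj (v i) (v j))
    (hN : ∀ i : Fin n, 3 ≤ i.val →
      (N i).card = 3 ∧ (∀ j ∈ N i, j < i) ∧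
      (∀ j : Fin n, j < i → (G.Adj (v i) (v j) ↔ j ∈ N i)) ∧
      (∀ j ∈ N i, ∀ k ∈ N i, j ≠ k → G.Adj (v j) (v k)))
    (l : G.edgeSet → ℝ≥0)
    (q₁ q₂ q₃ : EuclideanSpace ℝ (Fin 3)) :
    {p : V → EuclideanSpace ℝ (Fin 3) |
      (∀ (x y : V) (h : G.Adj x y),
        dist (p x) (p y) = (l ⟨s(x, y), G.mem_edgeSet.mpr h⟩ : ℝ)) ∧
      p (v ⟨0, by omega⟩) = q₁ ∧ p (v ⟨1, by omega⟩) = q₂ ∧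
      p (v ⟨2, by omega⟩) = q₃ ∧
      (∀ i : Fin n, 3 ≤ i.val →
        AffineIndependent ℝ (fun j : {x // x ∈ N i} => p (v j.1)))}.encard
      ≤ 2 ^ (n - 3) := by
  classical
  set S : Set (V → EuclideanSpace ℝ (Fin 3)) :=
    {p : V → EuclideanSpace ℝ (Fin 3) |
      (∀ (x y : V) (h : G.Adj x y),
        dist (p x) (p y) = (l ⟨s(x, y), G.mem_edgeSet.mpr h⟩ : ℝ)) ∧
      p (v ⟨0, by omega⟩) = q₁ ∧ p (v ⟨1, by omega⟩) = q₂ ∧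
      p (v ⟨2, by omega⟩) = q₃ ∧
      (∀ i : Fin n, 3 ≤ i.val →
        AffineIndependent ℝ (fun j : {x // x ∈ N i} => p (v j.1)))} with hSdef
  -- enumeration of the three earlier neighbors
  have hcard : ∀ (i : Fin n), 3 ≤ i.val → Fintype.card {x // x ∈ N i} = 3 := by
    intro i hi; rw [Fintype.card_coe]; exact (hN i hi).1
  let en : ∀ i : Fin n, 3 ≤ i.val → (Fin 3 ≃ {x // x ∈ N i}) :=
    fun i hi => (Fintype.equivFinOfCardEq (hcard i hi)).symm
  have hadj : ∀ (i : Fin n) (hi : 3 ≤ i.val) (m : Fin n), m ∈ N i → G.Adj (v i) (v m) := by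
    intro i hi m hm
    exact ((hN i hi).2.2.1 m ((hN i hi).2.1 m hm)).mpr hm
  -- radii
  let R : ∀ i : {i : Fin n // 3 ≤ i.val}, Fin 3 → ℝ :=
    fun i k => (l ⟨s(v i.1, v ((en i.1 i.2 k).1 : Fin n)),
      G.mem_edgeSet.mpr (hadj i.1 i.2 _ (en i.1 i.2 k).2)⟩ : ℝ)
  -- the solution sets
  let X : (V → EuclideanSpace ℝ (Fin 3)) → {i : Fin n // 3 ≤ i.val} →
      Set (EuclideanSpace ℝ (Fin 3)) :=
    fun p i => {x | ∀ k : Fin 3, dist x (p (v ((en i.1 i.2 k).1 : Fin n))) = R i k}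
  let F : (V → EuclideanSpace ℝ (Fin 3)) → ({i : Fin n // 3 ≤ i.val} → Bool) :=
    fun p i => decide (p (v i.1) = pick3 (X p i))
  -- membership of realized point in the solution set
  have hmem : ∀ p ∈ S, ∀ i : {i : Fin n // 3 ≤ i.val}, p (v i.1) ∈ X p i := by
    intro p hp i k
    exact hp.1 (v i.1) (v ((en i.1 i.2 k).1)) (hadj i.1 i.2 _ (en i.1 i.2 k).2)
  have haff : ∀ p ∈ S, ∀ i : {i : Fin n // 3 ≤ i.val},
      AffineIndependent ℝ (fun k : Fin 3 => p (v ((en i.1 i.2 k).1 : Fin n))) := by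
    intro p hp i
    have h1 := hp.2.2.2.2 i.1 i.2
    exact (affineIndependent_equiv (en i.1 i.2)).2 h1
  -- injectivity
  have hinj : Set.InjOn F S := by
    intro p hp p' hp' hFeq
    have key : ∀ m : ℕ, ∀ j : Fin n, j.val = m → p (v j) = p' (v j) := by
      intro m
      induction m using Nat.strong_induction_on with
      | _ m IH =>
        intro j hjm
        by_cases h3 : j.val < 3
        · have : j.val = 0 ∨ j.val = 1 ∨ j.val = 2 := by omega
          rcases this with h | h | h
          · have hj : j = ⟨0, by omega⟩ := Fin.ext (by simp only [Fin.val_mk]; omega)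
            rw [hj, hp.2.1, hp'.2.1]
          · have hj : j = ⟨1, by omega⟩ := Fin.ext (by simp only [Fin.val_mk]; omega)
            rw [hj, hp.2.2.1, hp'.2.2.1]
          · have hj : j = ⟨2, by omega⟩ := Fin.ext (by simp only [Fin.val_mk]; omega)
            rw [hj, hp.2.2.2.1, hp'.2.2.2.1]
        · push_neg at h3
          set i : {i : Fin n // 3 ≤ i.val} := ⟨j, h3⟩ with hidef
          have hAeq : (fun k : Fin 3 => p (v ((en i.1 i.2 k).1 : Fin n)))
              = fun k : Fin 3 => p' (v ((en i.1 i.2 k).1 : Fin n)) := by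
            funext k
            have hlt : ((en i.1 i.2 k).1 : Fin n) < j := (hN j h3).2.1 _ (en i.1 i.2 k).2
            exact IH ((en i.1 i.2 k).1).val (by omega) _ rfl
          have hXeq : X p i = X p' i := by
            have := congrArg (fun a : Fin 3 → EuclideanSpace ℝ (Fin 3) =>
              {x : EuclideanSpace ℝ (Fin 3) | ∀ k : Fin 3, dist x (a k) = R i k}) hAeq
            exact this
          have hy : p (v j) ∈ X p i := hmem p hp i
          have hz : p' (v j) ∈ X p i := hXeq ▸ hmem p' hp' i
          have hne : (X p i).Nonempty := ⟨_, hy⟩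
          have hpk : pick3 (X p i) ∈ X p i := pick3_mem hne
          have hiff : (p (v j) = pick3 (X p i)) ↔ (p' (v j) = pick3 (X p i)) := by
            have h1 := congrFun hFeq i
            simp only [F, ← hXeq] at h1
            exact decide_eq_decide.1 h1
          by_cases hcase : p (v j) = pick3 (X p i)
          · rw [hcase, hiff.1 hcase]
          · have hcase' : p' (v j) ≠ pick3 (X p i) := fun h => hcase (hiff.2 h)
            exact sphere_unique _ (haff p hp i) (R i) hpk hy hz
              (Ne.symm hcase) (Ne.symm hcase')
    funext x
    have := key (v.symm x).val (v.symm x) rfl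
    rwa [Equiv.apply_symm_apply] at this
  -- counting
  have hcardsub : Fintype.card {i : Fin n // 3 ≤ i.val} = n - 3 := by
    have e2 : {i : Fin n // 3 ≤ i.val} ≃ Fin (n - 3) :=
      { toFun := fun i => ⟨i.1.val - 3, by have := i.1.isLt; have := i.2; omega⟩
        invFun := fun k => ⟨⟨k.val + 3, by have := k.isLt; omega⟩, by simp⟩
        left_inv := fun i => by
          ext
          have := i.2
          simp
          omega
        right_inv := fun k => by ext; simp }
    rw [Fintype.card_congr e2, Fintype.card_fin]
  calc S.encard = (F '' S).encard := (hinj.encard_image).symm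
    _ ≤ (Set.univ : Set ({i : Fin n // 3 ≤ i.val} → Bool)).encard :=
        Set.encard_le_encard (Set.subset_univ _)
    _ = ((2 : ℕ) ^ (n - 3) : ℕ) := by
        rw [Set.encard_univ]
        rw [ENat.card_eq_coe_fintype_card]
        norm_cast
        rw [Fintype.card_fun, hcardsub, Fintype.card_bool]
    _ ≤ 2 ^ (n - 3) := by
        norm_cast
end

section
/- Fix nonnegative reals d₁₂, d₁₃, d₂₃, d₁₄, d₂₄. Then the set of values t ∈ ℝ≥0 for which there exist points p₁, p₂, p₃, p₄ ∈ EuclideanSpace ℝ (Fin 3) with dist p₁ p₂ = d₁₂, dist p₁ p₃ = d₁₃, dist p₂ p₃ = d₂₃, dist p₁ p₄ = d₁₄, dist p₂ p₄ = d₂₄, and dist p₃ p₄ = t, is an interval (a convex subset of ℝ). -/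
open RealInnerProductSpace

set_option maxHeartbeats 1000000

noncomputable def pt (x y z : ℝ) : EuclideanSpace ℝ (Fin 3) :=
  (WithLp.equiv 2 (Fin 3 → ℝ)).symm ![x, y, z]

lemma dist_pt (x y z x' y' z' : ℝ) :
    dist (pt x y z) (pt x' y' z') =
      Real.sqrt ((x - x')^2 + (y - y')^2 + (z - z')^2) := by
  rw [EuclideanSpace.dist_eq]
  congr 1
  simp [pt, Fin.sum_univ_three, Real.dist_eq, sq_abs]

lemma synth (d₁₂ d₁₃ d₂₃ d₁₄ d₂₄ t α β γ : ℝ)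
    (h₁₂ : 0 ≤ d₁₂) (h₁₃ : 0 ≤ d₁₃) (h₂₃ : 0 ≤ d₂₃) (h₁₄ : 0 ≤ d₁₄) (h₂₄ : 0 ≤ d₂₄)
    (ht : 0 ≤ t)
    (hα : 2*α = d₁₂^2 + d₁₃^2 - d₂₃^2) (hβ : 2*β = d₁₂^2 + d₁₄^2 - d₂₄^2)
    (hγ : t^2 = d₁₃^2 + d₁₄^2 - 2*γ)
    (h2a : α^2 ≤ d₁₃^2 * d₁₂^2) (h2b : β^2 ≤ d₁₄^2 * d₁₂^2)
    (h3 : γ^2 ≤ d₁₃^2 * d₁₄^2)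
    (h4 : (γ*d₁₂^2 - α*β)^2 ≤ (d₁₃^2*d₁₂^2 - α^2) * (d₁₄^2*d₁₂^2 - β^2)) :
    ∃ p₁ p₂ p₃ p₄ : EuclideanSpace ℝ (Fin 3),
      dist p₁ p₂ = d₁₂ ∧ dist p₁ p₃ = d₁₃ ∧ dist p₂ p₃ = d₂₃ ∧
      dist p₁ p₄ = d₁₄ ∧ dist p₂ p₄ = d₂₄ ∧ dist p₃ p₄ = t := by
  have hα0 : d₁₂ = 0 → α = 0 := by
    intro h; rw [h] at h2a; nlinarith [sq_nonneg α]
  have hβ0 : d₁₂ = 0 → β = 0 := by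
    intro h; rw [h] at h2b; nlinarith [sq_nonneg β]
  set a := α / d₁₂ with ha
  set b := β / d₁₂ with hb
  have F1 : a * d₁₂ = α := by
    rcases eq_or_ne d₁₂ 0 with h | h
    · simp [ha, h, hα0 h]
    · rw [ha]; field_simp
  have F2 : b * d₁₂ = β := by
    rcases eq_or_ne d₁₂ 0 with h | h
    · simp [hb, h, hβ0 h]
    · rw [hb]; field_simp
  have F3 : a^2 ≤ d₁₃^2 := by
    rcases eq_or_ne d₁₂ 0 with h | h
    · simp [ha, h]; positivity
    · have hd2 : 0 < d₁₂^2 := (sq_nonneg d₁₂).lt_of_ne (Ne.symm (pow_ne_zero 2 h))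
      rw [ha, div_pow, div_le_iff₀ hd2]; linarith
  have F4 : b^2 ≤ d₁₄^2 := by
    rcases eq_or_ne d₁₂ 0 with h | h
    · simp [hb, h]; positivity
    · have hd2 : 0 < d₁₂^2 := (sq_nonneg d₁₂).lt_of_ne (Ne.symm (pow_ne_zero 2 h))
      rw [hb, div_pow, div_le_iff₀ hd2]; linarith
  set r2 := d₁₃^2 - a^2 with hr2
  set s2 := d₁₄^2 - b^2 with hs2
  have hr2n : 0 ≤ r2 := by rw [hr2]; linarith
  have hs2n : 0 ≤ s2 := by rw [hs2]; linarith
  set ra := Real.sqrt r2 with hra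
  have hra2 : ra^2 = r2 := Real.sq_sqrt hr2n
  set δ := γ - a * b with hδ
  have F5 : δ^2 ≤ r2 * s2 := by
    rcases eq_or_ne d₁₂ 0 with h | h
    · have hA : a = 0 := by simp [ha, h]
      have hB : b = 0 := by simp [hb, h]
      rw [hδ, hr2, hs2, hA, hB]; simpa using h3
    · have hd2 : 0 < d₁₂^2 := (sq_nonneg d₁₂).lt_of_ne (Ne.symm (pow_ne_zero 2 h))
      have e1 : δ * d₁₂^2 = γ*d₁₂^2 - α*β := by rw [← F1, ← F2, hδ]; ring
      have e2 : r2 * d₁₂^2 = d₁₃^2*d₁₂^2 - α^2 := by rw [← F1, hr2]; ring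
      have e3 : s2 * d₁₂^2 = d₁₄^2*d₁₂^2 - β^2 := by rw [← F2, hs2]; ring
      have hd4 : 0 < d₁₂^2 * d₁₂^2 := mul_pos hd2 hd2
      refine le_of_mul_le_mul_right ?_ hd4
      calc δ^2 * (d₁₂^2 * d₁₂^2) = (δ*d₁₂^2) * (δ*d₁₂^2) := by ring
        _ = (γ*d₁₂^2 - α*β) * (γ*d₁₂^2 - α*β) := by rw [e1]
        _ ≤ (d₁₃^2*d₁₂^2 - α^2) * (d₁₄^2*d₁₂^2 - β^2) := by nlinarith [h4]
        _ = (r2*d₁₂^2) * (s2*d₁₂^2) := by rw [e2, e3]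
        _ = r2 * s2 * (d₁₂^2 * d₁₂^2) := by ring
  set c := if ra = 0 then 0 else δ / ra with hc
  have hraδ : ra = 0 → δ = 0 := by
    intro h
    have hr0 : r2 = 0 := by rw [← hra2, h]; ring
    have : δ^2 ≤ 0 := by rw [hr0] at F5; linarith [F5]
    have h2 : δ^2 = 0 := le_antisymm this (sq_nonneg δ)
    exact pow_eq_zero_iff two_ne_zero |>.mp h2
  have F7 : ra * c = δ := by
    rcases eq_or_ne ra 0 with h | h
    · simp [hc, h, hraδ h]
    · rw [hc, if_neg h]; field_simp
  have F6 : c^2 ≤ s2 := by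
    rcases eq_or_ne ra 0 with h | h
    · rw [hc, if_pos h]; simpa using hs2n
    · have hrapos : 0 < ra := lt_of_le_of_ne (Real.sqrt_nonneg _) (Ne.symm h)
      have hr2pos : 0 < r2 := by nlinarith [hra2]
      rw [hc, if_neg h, div_pow, hra2, div_le_iff₀ hr2pos]
      nlinarith [F5]
  set c' := Real.sqrt (s2 - c^2) with hc'
  have hc'2 : c'^2 = s2 - c^2 := Real.sq_sqrt (by linarith)
  refine ⟨pt 0 0 0, pt d₁₂ 0 0, pt a ra 0, pt b c c', ?_, ?_, ?_, ?_, ?_, ?_⟩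
  · rw [dist_pt, show (0-d₁₂)^2+((0:ℝ)-0)^2+((0:ℝ)-0)^2 = d₁₂^2 by ring, Real.sqrt_sq h₁₂]
  · rw [dist_pt, show (0-a)^2+(0-ra)^2+((0:ℝ)-0)^2 = d₁₃^2 by
      linear_combination hra2 + hr2, Real.sqrt_sq h₁₃]
  · rw [dist_pt, show (d₁₂-a)^2+(0-ra)^2+((0:ℝ)-0)^2 = d₂₃^2 by
      linear_combination hra2 + hr2 - 2*F1 - hα, Real.sqrt_sq h₂₃]
  · rw [dist_pt, show (0-b)^2+(0-c)^2+(0-c')^2 = d₁₄^2 by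
      linear_combination hc'2 + hs2, Real.sqrt_sq h₁₄]
  · rw [dist_pt, show (d₁₂-b)^2+(0-c)^2+(0-c')^2 = d₂₄^2 by
      linear_combination hc'2 + hs2 - 2*F2 - hβ, Real.sqrt_sq h₂₄]
  · rw [dist_pt, show (a-b)^2+(ra-c)^2+((0:ℝ)-c')^2 = t^2 by
      linear_combination hc'2 + hra2 + hr2 + hs2 - 2*F7 - 2*hδ - hγ, Real.sqrt_sq ht]

lemma extract (d₁₂ d₁₃ d₂₃ d₁₄ d₂₄ t α β γ : ℝ)
    (hα : 2*α = d₁₂^2 + d₁₃^2 - d₂₃^2) (hβ : 2*β = d₁₂^2 + d₁₄^2 - d₂₄^2)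
    (hγ : 2*γ = d₁₃^2 + d₁₄^2 - t^2)
    (p₁ p₂ p₃ p₄ : EuclideanSpace ℝ (Fin 3))
    (e₁₂ : dist p₁ p₂ = d₁₂) (e₁₃ : dist p₁ p₃ = d₁₃) (e₂₃ : dist p₂ p₃ = d₂₃)
    (e₁₄ : dist p₁ p₄ = d₁₄) (e₂₄ : dist p₂ p₄ = d₂₄) (e₃₄ : dist p₃ p₄ = t) :
    α^2 ≤ d₁₃^2 * d₁₂^2 ∧ β^2 ≤ d₁₄^2 * d₁₂^2 ∧ γ^2 ≤ d₁₃^2 * d₁₄^2 ∧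
      (γ*d₁₂^2 - α*β)^2 ≤ (d₁₃^2*d₁₂^2 - α^2) * (d₁₄^2*d₁₂^2 - β^2) := by
  set u := p₃ - p₁ with hu
  set v := p₂ - p₁ with hv
  set w := p₄ - p₁ with hw
  have nv : ‖v‖ = d₁₂ := by rw [← e₁₂, dist_eq_norm']
  have nu : ‖u‖ = d₁₃ := by rw [← e₁₃, dist_eq_norm']
  have nw : ‖w‖ = d₁₄ := by rw [← e₁₄, dist_eq_norm']
  have huv : u - v = p₃ - p₂ := sub_sub_sub_cancel_right _ _ _
  have hwv : w - v = p₄ - p₂ := sub_sub_sub_cancel_right _ _ _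
  have hwu : w - u = p₄ - p₃ := sub_sub_sub_cancel_right _ _ _
  have nuv : ‖u - v‖ = d₂₃ := by rw [huv, ← dist_eq_norm', e₂₃]
  have nwv : ‖w - v‖ = d₂₄ := by rw [hwv, ← dist_eq_norm', e₂₄]
  have nwu : ‖w - u‖ = t := by rw [hwu, ← dist_eq_norm', e₃₄]
  have iuv : ⟪u, v⟫ = α := by
    have h := norm_sub_sq_real u v
    rw [nu, nv, nuv] at h; linarith
  have iwv : ⟪w, v⟫ = β := by
    have h := norm_sub_sq_real w v
    rw [nw, nv, nwv] at h; linarith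
  have iwu : ⟪w, u⟫ = γ := by
    have h := norm_sub_sq_real w u
    rw [nw, nu, nwu] at h; linarith
  have iuw : ⟪u, w⟫ = γ := by rw [real_inner_comm]; exact iwu
  have ivu : ⟪v, u⟫ = α := by rw [real_inner_comm]; exact iuv
  have ivw : ⟪v, w⟫ = β := by rw [real_inner_comm]; exact iwv
  have iuu : ⟪u, u⟫ = d₁₃^2 := by rw [real_inner_self_eq_norm_sq, nu]
  have ivv : ⟪v, v⟫ = d₁₂^2 := by rw [real_inner_self_eq_norm_sq, nv]
  have iww : ⟪w, w⟫ = d₁₄^2 := by rw [real_inner_self_eq_norm_sq, nw]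
  have cs1 := real_inner_mul_inner_self_le u v
  have cs2 := real_inner_mul_inner_self_le w v
  have cs3 := real_inner_mul_inner_self_le u w
  rw [iuv, iuu, ivv] at cs1
  rw [iwv, iww, ivv] at cs2
  rw [iuw, iuu, iww] at cs3
  refine ⟨by nlinarith, by nlinarith, by nlinarith, ?_⟩
  set x := (d₁₂^2) • u - α • v with hx
  set y := (d₁₂^2) • w - β • v with hy
  have cs := real_inner_mul_inner_self_le x y
  have hxy : ⟪x, y⟫ = d₁₂^2*(γ*d₁₂^2 - α*β) := by
    simp only [hx, hy, inner_sub_left, inner_sub_right, real_inner_smul_left,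
      real_inner_smul_right, iuv, ivu, iwv, ivw, iuw, iwu, ivv, iuu, iww]
    ring
  have hxx : ⟪x, x⟫ = d₁₂^2*(d₁₃^2*d₁₂^2 - α^2) := by
    simp only [hx, inner_sub_left, inner_sub_right, real_inner_smul_left,
      real_inner_smul_right, iuv, ivu, ivv, iuu]
    ring
  have hyy : ⟪y, y⟫ = d₁₂^2*(d₁₄^2*d₁₂^2 - β^2) := by
    simp only [hy, inner_sub_left, inner_sub_right, real_inner_smul_left,
      real_inner_smul_right, iwv, ivw, ivv, iww]
    ring
  rw [hxy, hxx, hyy] at cs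
  rcases eq_or_ne d₁₂ 0 with h0 | h0
  · have : (γ*d₁₂^2 - α*β)^2 = (d₁₃^2*d₁₂^2 - α^2) * (d₁₄^2*d₁₂^2 - β^2) := by
      rw [h0]; ring
    linarith
  · have hd2 : 0 < d₁₂^2 := (sq_nonneg d₁₂).lt_of_ne (Ne.symm (pow_ne_zero 2 h0))
    have hd4 : 0 < d₁₂^2 * d₁₂^2 := mul_pos hd2 hd2
    refine le_of_mul_le_mul_left ?_ hd4
    calc (d₁₂^2 * d₁₂^2) * (γ*d₁₂^2 - α*β)^2
        = (d₁₂^2*(γ*d₁₂^2 - α*β)) * (d₁₂^2*(γ*d₁₂^2 - α*β)) := by ring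
      _ ≤ (d₁₂^2*(d₁₃^2*d₁₂^2 - α^2)) * (d₁₂^2*(d₁₄^2*d₁₂^2 - β^2)) := cs
      _ = (d₁₂^2 * d₁₂^2) * ((d₁₃^2*d₁₂^2 - α^2) * (d₁₄^2*d₁₂^2 - β^2)) := by ring

lemma sq_le_of_between {u v w C : ℝ} (h1 : u ≤ v) (h2 : v ≤ w)
    (hu : u^2 ≤ C) (hw : w^2 ≤ C) : v^2 ≤ C := by
  have h3 : |v| ≤ max |u| |w| := abs_le_max_abs_abs h1 h2
  rcases le_total |u| |w| with h4 | h4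
  · rw [max_eq_right h4] at h3; nlinarith [sq_abs v, sq_abs w, abs_nonneg v]
  · rw [max_eq_left h4] at h3; nlinarith [sq_abs v, sq_abs u, abs_nonneg v]

lemma comb_between {x y k l : ℝ} (hk : 0 ≤ k) (hl : 0 ≤ l) (hkl : k + l = 1)
    (h : x ≤ y) : x ≤ k*x + l*y ∧ k*x + l*y ≤ y := by
  have e1 : k*x + l*y - x = l*(y-x) := by linear_combination x*hkl
  have e2 : y - (k*x + l*y) = k*(y-x) := by linear_combination (-y)*hkl
  constructor
  · nlinarith [mul_nonneg hl (sub_nonneg.2 h)]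
  · nlinarith [mul_nonneg hk (sub_nonneg.2 h)]

lemma sq_mono' {u v : ℝ} (hu : 0 ≤ u) (h : u ≤ v) : u^2 ≤ v^2 := by nlinarith

/-- The single-tetrahedron "tetrahedral inequality" lemma: with five of the six
pairwise distances among four points in `ℝ³` fixed, the realizable values of
the sixth distance form an interval (a convex subset of `ℝ`). -/
theorem tetrahedral_interval
    (d₁₂ d₁₃ d₂₃ d₁₄ d₂₄ : ℝ)
    (h₁₂ : 0 ≤ d₁₂) (h₁₃ : 0 ≤ d₁₃) (h₂₃ : 0 ≤ d₂₃)
    (h₁₄ : 0 ≤ d₁₄) (h₂₄ : 0 ≤ d₂₄) :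
    Convex ℝ {t : ℝ |
      0 ≤ t ∧
      ∃ p₁ p₂ p₃ p₄ : EuclideanSpace ℝ (Fin 3),
        dist p₁ p₂ = d₁₂ ∧ dist p₁ p₃ = d₁₃ ∧ dist p₂ p₃ = d₂₃ ∧
        dist p₁ p₄ = d₁₄ ∧ dist p₂ p₄ = d₂₄ ∧ dist p₃ p₄ = t} := by
  intro x hx y hy k l hk hl hkl
  simp only [Set.mem_setOf_eq, smul_eq_mul] at hx hy ⊢
  obtain ⟨hx0, q₁, q₂, q₃, q₄, f₁₂, f₁₃, f₂₃, f₁₄, f₂₄, f₃₄⟩ := hx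
  obtain ⟨hy0, q₁', q₂', q₃', q₄', g₁₂, g₁₃, g₂₃, g₁₄, g₂₄, g₃₄⟩ := hy
  set t := k * x + l * y with htdef
  have ht0 : 0 ≤ t := add_nonneg (mul_nonneg hk hx0) (mul_nonneg hl hy0)
  set α := (d₁₂^2 + d₁₃^2 - d₂₃^2)/2 with hαdef
  set β := (d₁₂^2 + d₁₄^2 - d₂₄^2)/2 with hβdef
  have hα : 2*α = d₁₂^2 + d₁₃^2 - d₂₃^2 := by rw [hαdef]; ring
  have hβ : 2*β = d₁₂^2 + d₁₄^2 - d₂₄^2 := by rw [hβdef]; ring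
  set γx := (d₁₃^2 + d₁₄^2 - x^2)/2 with hγxdef
  set γy := (d₁₃^2 + d₁₄^2 - y^2)/2 with hγydef
  set γ := (d₁₃^2 + d₁₄^2 - t^2)/2 with hγdef
  have hγx : 2*γx = d₁₃^2 + d₁₄^2 - x^2 := by rw [hγxdef]; ring
  have hγy : 2*γy = d₁₃^2 + d₁₄^2 - y^2 := by rw [hγydef]; ring
  have hγ : t^2 = d₁₃^2 + d₁₄^2 - 2*γ := by rw [hγdef]; ring
  obtain ⟨Ex1, Ex2, Ex3, Ex4⟩ :=
    extract d₁₂ d₁₃ d₂₃ d₁₄ d₂₄ x α β γx hα hβ hγx q₁ q₂ q₃ q₄ f₁₂ f₁₃ f₂₃ f₁₄ f₂₄ f₃₄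
  obtain ⟨Ey1, Ey2, Ey3, Ey4⟩ :=
    extract d₁₂ d₁₃ d₂₃ d₁₄ d₂₄ y α β γy hα hβ hγy q₁' q₂' q₃' q₄' g₁₂ g₁₃ g₂₃ g₁₄ g₂₄ g₃₄
  have hbetween : (γy ≤ γ ∧ γ ≤ γx) ∨ (γx ≤ γ ∧ γ ≤ γy) := by
    rcases le_total x y with h | h
    · obtain ⟨hb1, hb2⟩ := comb_between hk hl hkl h
      have s1 : x^2 ≤ t^2 := sq_mono' hx0 hb1
      have s2 : t^2 ≤ y^2 := sq_mono' (le_trans hx0 hb1) hb2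
      exact Or.inl ⟨by linarith, by linarith⟩
    · obtain ⟨hb1, hb2⟩ := comb_between hl hk (by linarith) h
      have hb1' : y ≤ t := by rw [htdef]; linarith
      have hb2' : t ≤ x := by rw [htdef]; linarith
      have s1 : y^2 ≤ t^2 := sq_mono' hy0 hb1'
      have s2 : t^2 ≤ x^2 := sq_mono' (le_trans hy0 hb1') hb2'
      exact Or.inr ⟨by linarith, by linarith⟩
  have h3 : γ^2 ≤ d₁₃^2 * d₁₄^2 := by
    rcases hbetween with ⟨h1, h2⟩ | ⟨h1, h2⟩
    · exact sq_le_of_between h1 h2 Ey3 Ex3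
    · exact sq_le_of_between h1 h2 Ex3 Ey3
  have h4 : (γ*d₁₂^2 - α*β)^2 ≤ (d₁₃^2*d₁₂^2 - α^2) * (d₁₄^2*d₁₂^2 - β^2) := by
    have hd2 : (0:ℝ) ≤ d₁₂^2 := sq_nonneg d₁₂
    rcases hbetween with ⟨h1, h2⟩ | ⟨h1, h2⟩
    · have m1 := mul_le_mul_of_nonneg_right h1 hd2
      have m2 := mul_le_mul_of_nonneg_right h2 hd2
      exact sq_le_of_between (by linarith) (by linarith) Ey4 Ex4
    · have m1 := mul_le_mul_of_nonneg_right h1 hd2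
      have m2 := mul_le_mul_of_nonneg_right h2 hd2
      exact sq_le_of_between (by linarith) (by linarith) Ex4 Ey4
  exact ⟨ht0, synth d₁₂ d₁₃ d₂₃ d₁₄ d₂₄ t α β γ h₁₂ h₁₃ h₂₃ h₁₄ h₂₄ ht0 hα hβ hγ Ex1 Ex2 h3 h4⟩
end

section
/- Let G = (V, E) be a complete 2-tree on n ≥ 2 vertices with ordering v₁,…,vₙ as in the definition, let l : E → ℝ≥0 be edge lengths, and fix two distinct points q₁, q₂ ∈ EuclideanSpace ℝ (Fin 2). Then the set of realizations p : V → EuclideanSpace ℝ (Fin 2) of the linkage (G, l) such that p vⱼ = qⱼ for j = 1, 2 and such that, for every i ≥ 3, the images under p of the two earlier neighbors of vᵢ are distinct, is a finite set with at most 2^(n−2) elements. -/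
open scoped NNReal

lemma alg2 (a0 a1 b0 b1 x0 x1 y0 y1 : ℝ)
    (hd : (b0-a0)^2 + (b1-a1)^2 ≠ 0)
    (e1 : (x0-a0)^2+(x1-a1)^2 = (y0-a0)^2+(y1-a1)^2)
    (e2 : (x0-b0)^2+(x1-b1)^2 = (y0-b0)^2+(y1-b1)^2)
    (h3 : (0 ≤ (b0-a0)*(x1-a1)-(b1-a1)*(x0-a0)) ↔ (0 ≤ (b0-a0)*(y1-a1)-(b1-a1)*(y0-a0))) :
    x0 = y0 ∧ x1 = y1 := by
  have hdot : (b0-a0)*(x0-a0)+(b1-a1)*(x1-a1) = (b0-a0)*(y0-a0)+(b1-a1)*(y1-a1) := by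
    linear_combination (e1 - e2) / 2
  set cu := (b0-a0)*(x1-a1)-(b1-a1)*(x0-a0) with hcu
  set cw := (b0-a0)*(y1-a1)-(b1-a1)*(y0-a0) with hcw
  have hsq : cu * cu = cw * cw := by
    rw [hcu, hcw]
    linear_combination ((b0-a0)^2+(b1-a1)^2) * e1 -
      ((b0-a0)*(x0-a0)+(b1-a1)*(x1-a1) + ((b0-a0)*(y0-a0)+(b1-a1)*(y1-a1))) * hdot
  have hc : cu = cw := by
    rcases mul_self_eq_mul_self_iff.mp hsq with h | h
    · exact h
    · rcases le_or_gt 0 cu with hle | hlt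
      · have := h3.mp hle; linarith
      · have : ¬ 0 ≤ cw := fun hc => absurd (h3.mpr hc) (not_le.mpr hlt)
        push_neg at this; linarith
  have hdpos : 0 < (b0-a0)^2 + (b1-a1)^2 := lt_of_le_of_ne (by positivity) (Ne.symm hd)
  constructor
  · have h0 : (x0 - y0) * ((b0-a0)^2 + (b1-a1)^2) = 0 := by
      linear_combination (b0-a0) * hdot - (b1-a1) * hc
    rcases mul_eq_zero.mp h0 with h | h
    · linarith
    · exact absurd h hd
  · have h0 : (x1 - y1) * ((b0-a0)^2 + (b1-a1)^2) = 0 := by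
      linear_combination (b1-a1) * hdot + (b0-a0) * hc
    rcases mul_eq_zero.mp h0 with h | h
    · linarith
    · exact absurd h hd

noncomputable def cr2 (a b x : EuclideanSpace ℝ (Fin 2)) : ℝ :=
  (b 0 - a 0) * (x 1 - a 1) - (b 1 - a 1) * (x 0 - a 0)

lemma dsq2 (u w : EuclideanSpace ℝ (Fin 2)) :
    dist u w ^ 2 = (u 0 - w 0)^2 + (u 1 - w 1)^2 := by
  rw [EuclideanSpace.dist_eq, Real.sq_sqrt (by positivity)]
  simp [Fin.sum_univ_two, Real.dist_eq, sq_abs]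

lemma two_circle (a b x y : EuclideanSpace ℝ (Fin 2)) (hab : a ≠ b)
    (h1 : dist x a = dist y a) (h2 : dist x b = dist y b)
    (h3 : (0 ≤ cr2 a b x) ↔ (0 ≤ cr2 a b y)) : x = y := by
  have hd : (b 0 - a 0)^2 + (b 1 - a 1)^2 ≠ 0 := by
    intro h
    apply hab
    have h0 : b 0 - a 0 = 0 := by nlinarith [sq_nonneg (b 0 - a 0), sq_nonneg (b 1 - a 1)]
    have h1' : b 1 - a 1 = 0 := by nlinarith [sq_nonneg (b 0 - a 0), sq_nonneg (b 1 - a 1)]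
    ext i
    fin_cases i <;> simp <;> linarith
  have e1 : (x 0 - a 0)^2 + (x 1 - a 1)^2 = (y 0 - a 0)^2 + (y 1 - a 1)^2 := by
    have := congrArg (· ^ 2) h1
    simpa [dsq2] using this
  have e2 : (x 0 - b 0)^2 + (x 1 - b 1)^2 = (y 0 - b 0)^2 + (y 1 - b 1)^2 := by
    have := congrArg (· ^ 2) h2
    simpa [dsq2] using this
  obtain ⟨g0, g1⟩ := alg2 (a 0) (a 1) (b 0) (b 1) (x 0) (x 1) (y 0) (y 1) hd e1 e2
    (by simpa [cr2] using h3)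
  ext i
  fin_cases i <;> simp <;> linarith

noncomputable def sigma2 {V : Type*} {n : ℕ} (v : Fin n ≃ V) (N : Fin n → Finset (Fin n))
    (p : V → EuclideanSpace ℝ (Fin 2)) (i : Fin n) : Bool :=
  if h : (N i).Nonempty then
    decide (0 ≤ cr2 (p (v ((N i).min' h))) (p (v ((N i).max' h))) (p (v i)))
  else false


/-- A complete 2-tree linkage, with the base edge pinned down at two distinct
points and the two earlier neighbors of each sequentially placed vertex having
distinct images, has at most `2 ^ (n - 2)` realizations in the plane. Here
`v : Fin n ≃ V` is the 2-tree ordering of the vertices and `N i` is the set of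
earlier neighbors of the `i`-th vertex. -/
theorem complete2Tree_realizations_finite
    {V : Type*} [Fintype V] {n : ℕ} (hn : 2 ≤ n)
    (G : SimpleGraph V) (v : Fin n ≃ V) (N : Fin n → Finset (Fin n))
    (hbase : ∀ i j : Fin n, i.val < 2 → j.val < 2 → i ≠ j → G.Adj (v i) (v j))
    (hN : ∀ i : Fin n, 2 ≤ i.val →
      (N i).card = 2 ∧ (∀ j ∈ N i, j < i) ∧
      (∀ j : Fin n, j < i → (G.Adj (v i) (v j) ↔ j ∈ N i)) ∧
      (∀ j ∈ N i, ∀ k ∈ N i, j ≠ k → G.Adj (v j) (v k)))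
    (l : G.edgeSet → ℝ≥0)
    (q₁ q₂ : EuclideanSpace ℝ (Fin 2)) (hq : q₁ ≠ q₂) :
    {p : V → EuclideanSpace ℝ (Fin 2) |
      (∀ (x y : V) (h : G.Adj x y),
        dist (p x) (p y) = (l ⟨s(x, y), G.mem_edgeSet.mpr h⟩ : ℝ)) ∧
      p (v ⟨0, by omega⟩) = q₁ ∧ p (v ⟨1, by omega⟩) = q₂ ∧
      (∀ i : Fin n, 2 ≤ i.val →
        ∀ j ∈ N i, ∀ k ∈ N i, j ≠ k → p (v j) ≠ p (v k))}.encard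
      ≤ 2 ^ (n - 2) := by
  classical
  set f : (V → EuclideanSpace ℝ (Fin 2)) → (Fin (n - 2) → Bool) :=
    fun p m => sigma2 v N p ⟨m.val + 2, by omega⟩ with hf
  set S : Set (V → EuclideanSpace ℝ (Fin 2)) :=
    {p : V → EuclideanSpace ℝ (Fin 2) |
      (∀ (x y : V) (h : G.Adj x y),
        dist (p x) (p y) = (l ⟨s(x, y), G.mem_edgeSet.mpr h⟩ : ℝ)) ∧
      p (v ⟨0, by omega⟩) = q₁ ∧ p (v ⟨1, by omega⟩) = q₂ ∧
      (∀ i : Fin n, 2 ≤ i.val →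
        ∀ j ∈ N i, ∀ k ∈ N i, j ≠ k → p (v j) ≠ p (v k))} with hSdef
  have hinj : Set.InjOn f S := by
    intro p hp p' hp' hσ
    obtain ⟨hp1, hp2, hp3, hp4⟩ := hp
    obtain ⟨hp'1, hp'2, hp'3, hp'4⟩ := hp'
    have main : ∀ m : ℕ, ∀ i : Fin n, i.val = m → p (v i) = p' (v i) := by
      intro m
      induction m using Nat.strong_induction_on with
      | _ m IH =>
        intro i him
        rcases lt_or_ge i.val 2 with h2 | h2
        · have h01 : i = ⟨0, by omega⟩ ∨ i = ⟨1, by omega⟩ := by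
            rcases (by omega : i.val = 0 ∨ i.val = 1) with h | h
            · exact Or.inl (Fin.ext h)
            · exact Or.inr (Fin.ext h)
          rcases h01 with h | h
          · rw [h]; exact hp2.trans hp'2.symm
          · rw [h]; exact hp3.trans hp'3.symm
        · obtain ⟨hcard, hlt, hadj, hNadj⟩ := hN i h2
          have hne : (N i).Nonempty := by
            rw [← Finset.card_pos, hcard]; norm_num
          set j := (N i).min' hne with hj
          set k := (N i).max' hne with hk
          have hjN : j ∈ N i := Finset.min'_mem _ _
          have hkN : k ∈ N i := Finset.max'_mem _ _
          have hjk : j < k := Finset.min'_lt_max'_of_card _ (by rw [hcard]; norm_num)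
          have hji : j < i := hlt j hjN
          have hki : k < i := hlt k hkN
          have haij : G.Adj (v i) (v j) := (hadj j hji).mpr hjN
          have haik : G.Adj (v i) (v k) := (hadj k hki).mpr hkN
          have hpj : p (v j) = p' (v j) := IH j.val (by omega) j rfl
          have hpk : p (v k) = p' (v k) := IH k.val (by omega) k rfl
          have hnepts : p (v j) ≠ p (v k) := hp4 i h2 j hjN k hkN hjk.ne
          have d1 : dist (p (v i)) (p (v j)) = dist (p' (v i)) (p' (v j)) := by
            rw [hp1 _ _ haij, hp'1 _ _ haij]
          have d2 : dist (p (v i)) (p (v k)) = dist (p' (v i)) (p' (v k)) := by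
            rw [hp1 _ _ haik, hp'1 _ _ haik]
          have hieq : i = (⟨(⟨i.val - 2, by omega⟩ : Fin (n - 2)).val + 2, by omega⟩ : Fin n) :=
            Fin.ext (by show i.val = i.val - 2 + 2; omega)
          have hm : sigma2 v N p i = sigma2 v N p' i := by
            rw [hieq]
            exact congrFun hσ ⟨i.val - 2, by omega⟩
          unfold sigma2 at hm
          rw [dif_pos hne, dif_pos hne] at hm
          have hsign : (0 ≤ cr2 (p (v j)) (p (v k)) (p (v i))) ↔
              (0 ≤ cr2 (p' (v j)) (p' (v k)) (p' (v i))) := by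
            rw [← hj, ← hk] at hm
            exact decide_eq_decide.mp hm
          rw [← hpj, ← hpk] at hsign
          exact two_circle (p (v j)) (p (v k)) (p (v i)) (p' (v i)) hnepts
            (by rw [d1, hpj]) (by rw [d2, hpk]) hsign
    funext x
    have := main (v.symm x).val (v.symm x) rfl
    simpa using this
  calc S.encard = (f '' S).encard := (Set.InjOn.encard_image hinj).symm
    _ ≤ (Set.univ : Set (Fin (n - 2) → Bool)).encard :=
        Set.encard_le_encard (Set.subset_univ _)
    _ ≤ 2 ^ (n - 2) := by
        rw [Set.encard_univ]
        simp [ENat.card_eq_coe_fintype_card]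
end

section
/- Let G = (V, E) be a complete 3-tree on n ≥ 4 vertices with ordering v₁,…,vₙ as in the definition, and let e = {u, w} ∈ E. Let p : V → EuclideanSpace ℝ (Fin 3) be a map such that every set of four vertices that induces a complete subgraph of G has affinely independent images under p. Then for every ε > 0 there exists a map q : V → EuclideanSpace ℝ (Fin 3) with dist (q x) (p x) < ε for all x ∈ V, dist (q a) (q b) = dist (p a) (p b) for every edge {a, b} ∈ E \ {e}, and dist (q u) (q w) ≠ dist (p u) (p w). -/
set_option maxHeartbeats 4000000
set_option linter.unusedSectionVars false
set_option linter.unusedVariables false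

open scoped RealInnerProductSpace

section Geometry
variable {E : Type*} [NormedAddCommGroup E] [InnerProductSpace ℝ E]

lemma norm_eq_of_sq {x : E} {r : ℝ} (hr : 0 ≤ r) (h : ‖x‖^2 = r^2) : ‖x‖ = r := by
  nlinarith [norm_nonneg x]

lemma triple_rel {a b c : E} (h : LinearIndependent ℝ ![a, b, c]) :
    ∀ s t r : ℝ, s • a + t • b + r • c = 0 → s = 0 ∧ t = 0 ∧ r = 0 := by
  intro s t r hrel
  have := Fintype.linearIndependent_iff.mp h ![s, t, r] ?_
  · exact ⟨this 0, this 1, this 2⟩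
  · rw [Fin.sum_univ_three]
    simpa [add_assoc] using hrel

lemma li_pair {x y : E} (h : ∀ s t : ℝ, s • x + t • y = 0 → s = 0 ∧ t = 0) :
    LinearIndependent ℝ ![x, y] := by
  apply Fintype.linearIndependent_iff.mpr
  intro g hg
  have := h (g 0) (g 1) (by rw [Fin.sum_univ_two] at hg; simpa using hg)
  intro i; fin_cases i <;> simp [this.1, this.2]

lemma norm_sq_triple (x y z : E) (c1 c2 c3 : ℝ) (hxy : ⟪x, y⟫ = 0) (hxz : ⟪x, z⟫ = 0)
    (hyz : ⟪y, z⟫ = 0) :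
    ‖c1 • x + c2 • y + c3 • z‖^2 = c1^2 * ‖x‖^2 + c2^2 * ‖y‖^2 + c3^2 * ‖z‖^2 := by
  have hyx : ⟪y, x⟫ = 0 := by rw [real_inner_comm]; exact hxy
  have hzx : ⟪z, x⟫ = 0 := by rw [real_inner_comm]; exact hxz
  have hzy : ⟪z, y⟫ = 0 := by rw [real_inner_comm]; exact hyz
  rw [← real_inner_self_eq_norm_sq, ← real_inner_self_eq_norm_sq,
    ← real_inner_self_eq_norm_sq, ← real_inner_self_eq_norm_sq]
  simp only [inner_add_left, inner_add_right, real_inner_smul_left, real_inner_smul_right,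
    hxy, hxz, hyz, hyx, hzx, hzy]
  ring

/-- From affine independence of 4 points, linear independence of differences. -/
lemma linIndep_of_affIndep {P0 P1 P2 P3 : E}
    (h : AffineIndependent ℝ ![P0, P1, P2, P3]) :
    LinearIndependent ℝ ![P1 - P0, P2 - P0, P3 - P0] := by
  rw [affineIndependent_iff_linearIndependent_vsub ℝ _ 0] at h
  have h2 := h.comp (fun i : Fin 3 => (⟨i.succ, Fin.succ_ne_zero i⟩ : {x : Fin 4 // x ≠ 0}))
    (fun i j hij => Fin.succ_injective _ (congrArg Subtype.val hij))
  convert h2 using 1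
  · funext i
    fin_cases i <;> simp [vsub_eq_sub]
  · rfl


lemma pair_rel {a b : E} (h : LinearIndependent ℝ ![a, b]) :
    ∀ s t : ℝ, s • a + t • b = 0 → s = 0 ∧ t = 0 := by
  intro s t hrel
  have := Fintype.linearIndependent_iff.mp h ![s, t] ?_
  · exact ⟨this 0, this 1⟩
  · rw [Fin.sum_univ_two]
    simpa using hrel


lemma gram_det_pos' {a b : E} (h : LinearIndependent ℝ ![a, b]) :
    0 < ⟪a, a⟫ * ⟪b, b⟫ - ⟪a, b⟫^2 := by
  have hb : b ≠ 0 := h.ne_zero 1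
  have ha : a ≠ 0 := h.ne_zero 0
  have h1 : ⟪a, b⟫ < ‖a‖ * ‖b‖ := by
    rw [inner_lt_norm_mul_iff_real]
    intro heq
    rcases pair_rel h ‖b‖ (-‖a‖) (by rw [neg_smul, ← heq]; abel) with ⟨h1, _⟩
    exact hb (norm_eq_zero.mp h1)
  have h2 : ⟪-a, b⟫ < ‖-a‖ * ‖b‖ := by
    rw [inner_lt_norm_mul_iff_real]
    intro heq
    rw [norm_neg] at heq
    have hrel : ‖b‖ • a + ‖a‖ • b = 0 := by
      have : ‖b‖ • a = - (‖a‖ • b) := by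
        rw [← neg_neg (‖b‖ • a), ← smul_neg, heq]
      rw [this]; abel
    rcases pair_rel h ‖b‖ ‖a‖ hrel with ⟨h1, _⟩
    exact hb (norm_eq_zero.mp h1)
  rw [inner_neg_left, norm_neg, neg_lt] at h2
  nlinarith [real_inner_self_eq_norm_sq a, real_inner_self_eq_norm_sq b]


/-- One-vertex flex: `D` can be moved preserving distances to `A`, `B`
while changing the distance to `W`. -/
lemma flex_one (A B W D : E)
    (h : LinearIndependent ℝ ![B - A, W - A, D - A])
    {ε : ℝ} (hε : 0 < ε) :
    ∃ D' : E, dist D' D < ε ∧ dist D' A = dist D A ∧ dist D' B = dist D B ∧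
      dist D' W ≠ dist D W := by
  set a := B - A with ha
  set w0 := W - A with hw0
  set d0 := D - A with hd0
  clear_value a w0 d0
  -- basic independence facts
  have had : LinearIndependent ℝ ![a, d0] := by
    apply li_pair
    intro s t hst
    have := triple_rel h s 0 t (by simpa using hst)
    exact ⟨this.1, this.2.2⟩
  have ha0 : a ≠ 0 := had.ne_zero 0
  have hg : 0 < ⟪a, a⟫ := by
    rw [real_inner_self_eq_norm_sq]
    have : 0 < ‖a‖ := norm_pos_iff.mpr ha0
    positivity
  set g := ⟪a, a⟫ with hgdef
  set α : ℝ := ⟪d0, a⟫ / g with hα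
  set v0 := d0 - α • a with hv0def
  have hd0v : d0 = α • a + v0 := by rw [hv0def]; abel
  have hv0a : ⟪v0, a⟫ = 0 := by
    rw [hv0def, inner_sub_left, real_inner_smul_left]
    rw [hα, ← hgdef]
    field_simp
    ring
  have hv0 : v0 ≠ 0 := by
    intro h0
    have : (-α) • a + (0:ℝ) • w0 + (1:ℝ) • d0 = 0 := by
      rw [hv0def] at h0
      simp only [zero_smul, add_zero, one_smul, neg_smul]
      rw [← sub_eq_zero] at h0 ⊢
      convert h0 using 1
      abel
    exact one_ne_zero (triple_rel h _ _ _ this).2.2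
  set Δ2 := ⟪a, a⟫ * ⟪d0, d0⟫ - ⟪a, d0⟫^2 with hΔ2
  have hΔ2pos : 0 < Δ2 := gram_det_pos' had
  set xa : ℝ := (⟪w0, a⟫ * ⟪d0, d0⟫ - ⟪w0, d0⟫ * ⟪a, d0⟫) / Δ2 with hxa
  set xd : ℝ := (⟪w0, d0⟫ * ⟪a, a⟫ - ⟪w0, a⟫ * ⟪a, d0⟫) / Δ2 with hxd
  set m := w0 - xa • a - xd • d0 with hmdef
  have hma : ⟪m, a⟫ = 0 := by
    rw [hmdef, inner_sub_left, inner_sub_left, real_inner_smul_left, real_inner_smul_left]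
    rw [real_inner_comm a d0, hxa, hxd, hΔ2]
    field_simp
    have hne : ⟪d0, d0⟫ * ⟪a, a⟫ - ⟪a, d0⟫ ^ 2 ≠ 0 := by
      intro h0; exact hΔ2pos.ne' (by rw [hΔ2]; linear_combination h0)
    linear_combination (-⟪w0, a⟫) * mul_inv_cancel₀ hne
  have hmd : ⟪m, d0⟫ = 0 := by
    rw [hmdef, inner_sub_left, inner_sub_left, real_inner_smul_left, real_inner_smul_left]
    rw [hxa, hxd, hΔ2]
    field_simp
    have hne : ⟪d0, d0⟫ * ⟪a, a⟫ - ⟪a, d0⟫ ^ 2 ≠ 0 := by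
      intro h0; exact hΔ2pos.ne' (by rw [hΔ2]; linear_combination h0)
    linear_combination (-⟪w0, d0⟫) * mul_inv_cancel₀ hne
  have hm0 : m ≠ 0 := by
    intro h0
    have : (-xa) • a + (1:ℝ) • w0 + (-xd) • d0 = 0 := by
      rw [hmdef] at h0
      simp only [one_smul, neg_smul]
      rw [← sub_eq_zero] at h0 ⊢
      convert h0 using 1
      abel
    exact one_ne_zero (triple_rel h _ _ _ this).2.1
  have hmv0 : ⟪m, v0⟫ = 0 := by
    rw [hv0def, inner_sub_right, real_inner_smul_right, hma, hmd]
    ring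
  have hmw0 : ⟪m, w0⟫ = ‖m‖^2 := by
    have : w0 = m + (xa • a + xd • d0) := by rw [hmdef]; abel
    rw [this, inner_add_right, inner_add_right, real_inner_smul_right, real_inner_smul_right,
      hma, hmd, real_inner_self_eq_norm_sq]
    ring
  clear_value g α v0 Δ2 xa xd m
  set K := ⟪v0, w0⟫ with hK
  have hnv0 : 0 < ‖v0‖ := norm_pos_iff.mpr hv0
  have hnm : 0 < ‖m‖ := norm_pos_iff.mpr hm0
  set c : ℝ := ‖v0‖ / ‖m‖ with hc
  have hcpos : 0 < c := div_pos hnv0 hnm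
  set t : ℝ := min 1 (min (ε / (4 * ‖v0‖ + 1)) (‖v0‖ * ‖m‖ / (2 * (|K| + 1)))) with htdef
  have ht1 : t ≤ 1 := min_le_left _ _
  have htε : t ≤ ε / (4 * ‖v0‖ + 1) := le_trans (min_le_right _ _) (min_le_left _ _)
  have htK : t ≤ ‖v0‖ * ‖m‖ / (2 * (|K| + 1)) := le_trans (min_le_right _ _) (min_le_right _ _)
  have htpos : 0 < t := by
    apply lt_min one_pos
    apply lt_min
    · positivity
    · positivity
  have ht2 : (0:ℝ) < 1 + t^2 := by positivity
  clear_value t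
  set β : ℝ := (1 - t^2) / (1 + t^2) with hβ
  set γ : ℝ := 2 * t / (1 + t^2) * c with hγ
  have hnorm : ‖α • a + β • v0 + γ • m‖^2 = ‖d0‖^2 := by
    rw [norm_sq_triple a v0 m α β γ (by rw [real_inner_comm]; exact hv0a)
      (by rw [real_inner_comm]; exact hma) (by rw [real_inner_comm]; exact hmv0)]
    conv_rhs => rw [hd0v]
    have e2 : α • a + v0 = α • a + (1:ℝ) • v0 + (0:ℝ) • m := by simp
    rw [e2, norm_sq_triple a v0 m α 1 0 (by rw [real_inner_comm]; exact hv0a)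
      (by rw [real_inner_comm]; exact hma) (by rw [real_inner_comm]; exact hmv0)]
    have hc2 : γ^2 * ‖m‖^2 = (2 * t / (1 + t^2))^2 * ‖v0‖^2 := by
      rw [hγ, hc]; field_simp
    have hβγ : β^2 + (2 * t / (1 + t^2))^2 = 1 := by
      rw [hβ]; field_simp; ring
    nlinarith [hβγ, hc2]
  refine ⟨A + (α • a + β • v0 + γ • m), ?_, ?_, ?_, ?_⟩
  · -- distance to D
    have hdiff : A + (α • a + β • v0 + γ • m) - D = (β - 1) • v0 + γ • m := by
      have : D = A + (α • a + v0) := by rw [← hd0v]; rw [hd0]; abel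
      rw [this]
      rw [sub_smul, one_smul]
      abel
    rw [dist_eq_norm, hdiff]
    have hb1 : |β - 1| = 2 * t^2 / (1 + t^2) := by
      rw [hβ]
      rw [abs_of_nonpos]
      · field_simp; ring
      · rw [div_sub_one (by positivity)]
        apply div_nonpos_of_nonpos_of_nonneg <;> nlinarith
    have hγabs : |γ| = γ := abs_of_nonneg (by positivity)
    calc ‖(β - 1) • v0 + γ • m‖ ≤ ‖(β - 1) • v0‖ + ‖γ • m‖ := norm_add_le _ _
      _ = |β - 1| * ‖v0‖ + |γ| * ‖m‖ := by rw [norm_smul, norm_smul]; rfl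
      _ = (2 * t^2 / (1 + t^2)) * ‖v0‖ + (2 * t / (1 + t^2)) * ‖v0‖ := by
          rw [hb1, hγabs, hγ, hc]; field_simp
      _ < ε := by
          rw [le_div_iff₀ (by positivity : (0:ℝ) < 4 * ‖v0‖ + 1)] at htε
          have h1 : 2 * t^2 / (1 + t^2) ≤ 2 * t := by
            rw [div_le_iff₀ ht2]; nlinarith
          have h2 : 2 * t / (1 + t^2) ≤ 2 * t := by
            rw [div_le_iff₀ ht2]; nlinarith
          nlinarith
  · -- distance to A
    rw [dist_eq_norm, dist_eq_norm]
    apply norm_eq_of_sq (norm_nonneg _)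
    have e1 : A + (α • a + β • v0 + γ • m) - A = α • a + β • v0 + γ • m := by abel
    rw [e1, ← hd0]
    exact hnorm
  · -- distance to B
    rw [dist_eq_norm, dist_eq_norm]
    apply norm_eq_of_sq (norm_nonneg _)
    have e1 : A + (α • a + β • v0 + γ • m) - B = (α • a + β • v0 + γ • m) - a := by
      rw [ha]; abel
    have e2 : D - B = d0 - a := by rw [hd0, ha]; abel
    rw [e1, e2, @norm_sub_sq_real, @norm_sub_sq_real]
    have hin1 : ⟪α • a + β • v0 + γ • m, a⟫ = α * g := by
      rw [inner_add_left, inner_add_left, real_inner_smul_left, real_inner_smul_left, real_inner_smul_left,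
        hv0a, hma]
      simp [hgdef]
    have hin2 : ⟪d0, a⟫ = α * g := by
      rw [hα]; field_simp
    rw [hin1, hin2, hnorm]
  · -- distance to W changes
    rw [dist_eq_norm, dist_eq_norm]
    intro heq
    have hsq : ‖A + (α • a + β • v0 + γ • m) - W‖^2 = ‖D - W‖^2 := by rw [heq]
    have e1 : A + (α • a + β • v0 + γ • m) - W = (α • a + β • v0 + γ • m) - w0 := by
      rw [hw0]; abel
    have e2 : D - W = d0 - w0 := by rw [hd0, hw0]; abel
    rw [e1, e2, @norm_sub_sq_real, @norm_sub_sq_real] at hsq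
    rw [hnorm] at hsq
    -- hsq : ‖d0‖^2 - 2*⟪u', w0⟫ + ‖w0‖^2 = ‖d0‖^2 - 2*⟪d0, w0⟫ + ‖w0‖^2
    have hinner : ⟪α • a + β • v0 + γ • m, w0⟫ = ⟪d0, w0⟫ + (β - 1) * K + γ * ‖m‖^2 := by
      conv_rhs => rw [hd0v]
      rw [inner_add_left, inner_add_left, inner_add_left, real_inner_smul_left, real_inner_smul_left,
        real_inner_smul_left, hmw0]
      rw [hK]
      ring
    rw [hinner] at hsq
    have hKeq : (β - 1) * K + γ * ‖m‖^2 = 0 := by linarith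
    have hγm : γ * ‖m‖^2 = (2 * t / (1 + t^2)) * (‖v0‖ * ‖m‖) := by
      rw [hγ, hc]; field_simp
    have hβ1 : β - 1 = -(2 * t^2) / (1 + t^2) := by
      rw [hβ]; field_simp; ring
    rw [hγm, hβ1] at hKeq
    have hfinal : (2 * t / (1 + t^2)) * (‖v0‖ * ‖m‖ - t * K) = 0 := by
      rw [← hKeq]; field_simp; ring
    have h1 : (0:ℝ) < 2 * t / (1 + t^2) := by positivity
    have h2 : 0 < ‖v0‖ * ‖m‖ - t * K := by
      rw [le_div_iff₀ (by positivity : (0:ℝ) < 2 * (|K| + 1))] at htK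
      have : t * K ≤ t * |K| := by
        apply mul_le_mul_of_nonneg_left (le_abs_self K) htpos.le
      nlinarith [abs_nonneg K]
    nlinarith [mul_pos h1 h2]

noncomputable def triDelta (a b : E) : ℝ := ⟪a,a⟫ * ⟪b,b⟫ - ⟪a,b⟫^2

noncomputable def triX (sA sB sC : ℝ) (a b : E) : ℝ :=
  ((sA - sB + ⟪a,a⟫)/2 * ⟪b,b⟫ - (sA - sC + ⟪b,b⟫)/2 * ⟪a,b⟫) / triDelta a b

noncomputable def triY (sA sB sC : ℝ) (a b : E) : ℝ :=
  ((sA - sC + ⟪b,b⟫)/2 * ⟪a,a⟫ - (sA - sB + ⟪a,a⟫)/2 * ⟪a,b⟫) / triDelta a b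

noncomputable def triW (sA sB sC : ℝ) (a b : E) : E :=
  triX sA sB sC a b • a + triY sA sB sC a b • b

noncomputable def triNv (d0 a b : E) : E :=
  d0 - ((⟪d0,a⟫ * ⟪b,b⟫ - ⟪d0,b⟫ * ⟪a,b⟫)/triDelta a b) • a
     - ((⟪d0,b⟫ * ⟪a,a⟫ - ⟪d0,a⟫ * ⟪a,b⟫)/triDelta a b) • b

noncomputable def triR (sA sB sC : ℝ) (a b : E) : ℝ := sA - ‖triW sA sB sC a b‖^2

noncomputable def triPt (d0 : E) (sA sB sC : ℝ) (A' a b : E) : E :=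
  A' + triW sA sB sC a b +
    (Real.sqrt (triR sA sB sC a b) / ‖triNv d0 a b‖) • triNv d0 a b

lemma triNv_inner_a (d0 a b : E) (hΔ : triDelta a b ≠ 0) : ⟪triNv d0 a b, a⟫ = 0 := by
  rw [triNv, inner_sub_left, inner_sub_left, real_inner_smul_left, real_inner_smul_left,
    real_inner_comm a b]
  rw [triDelta] at hΔ ⊢
  field_simp
  have hne : ⟪b, b⟫ * ⟪a, a⟫ - ⟪a, b⟫ ^ 2 ≠ 0 := by
    intro h0; exact hΔ (by linear_combination h0)
  linear_combination (-⟪d0, a⟫) * mul_inv_cancel₀ hne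

lemma triNv_inner_b (d0 a b : E) (hΔ : triDelta a b ≠ 0) : ⟪triNv d0 a b, b⟫ = 0 := by
  rw [triNv, inner_sub_left, inner_sub_left, real_inner_smul_left, real_inner_smul_left]
  rw [triDelta] at hΔ ⊢
  field_simp
  have hne : ⟪b, b⟫ * ⟪a, a⟫ - ⟪a, b⟫ ^ 2 ≠ 0 := by
    intro h0; exact hΔ (by linear_combination h0)
  linear_combination (-⟪d0, b⟫) * mul_inv_cancel₀ hne

lemma triW_inner_a (sA sB sC : ℝ) (a b : E) (hΔ : triDelta a b ≠ 0) :
    ⟪triW sA sB sC a b, a⟫ = (sA - sB + ⟪a,a⟫)/2 := by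
  rw [triW, inner_add_left, real_inner_smul_left, real_inner_smul_left, triX, triY,
    real_inner_comm a b]
  rw [triDelta] at hΔ ⊢
  field_simp
  ring

lemma triW_inner_b (sA sB sC : ℝ) (a b : E) (hΔ : triDelta a b ≠ 0) :
    ⟪triW sA sB sC a b, b⟫ = (sA - sC + ⟪b,b⟫)/2 := by
  rw [triW, inner_add_left, real_inner_smul_left, real_inner_smul_left, triX, triY]
  rw [triDelta] at hΔ ⊢
  field_simp
  ring

lemma triPt_exact (d0 : E) (sA sB sC : ℝ) (A' a b : E) (hΔ : triDelta a b ≠ 0)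
    (hnv : triNv d0 a b ≠ 0) (hR : 0 ≤ triR sA sB sC a b) :
    ‖triPt d0 sA sB sC A' a b - A'‖^2 = sA ∧
    ‖triPt d0 sA sB sC A' a b - (A' + a)‖^2 = sB ∧
    ‖triPt d0 sA sB sC A' a b - (A' + b)‖^2 = sC := by
  set W := triW sA sB sC a b with hW
  set nv := triNv d0 a b with hnvdef
  set z : ℝ := Real.sqrt (triR sA sB sC a b) / ‖nv‖ with hz
  have hWnv : ⟪W, nv⟫ = 0 := by
    rw [hW, triW, inner_add_left, real_inner_smul_left, real_inner_smul_left,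
      real_inner_comm nv a, real_inner_comm nv b, hnvdef,
      triNv_inner_a d0 a b hΔ, triNv_inner_b d0 a b hΔ]
    ring
  have hWa : ⟪W, a⟫ = (sA - sB + ⟪a,a⟫)/2 := triW_inner_a sA sB sC a b hΔ
  have hWb : ⟪W, b⟫ = (sA - sC + ⟪b,b⟫)/2 := triW_inner_b sA sB sC a b hΔ
  have hnva : ⟪nv, a⟫ = 0 := triNv_inner_a d0 a b hΔ
  have hnvb : ⟪nv, b⟫ = 0 := triNv_inner_b d0 a b hΔ
  have hnvnorm : 0 < ‖nv‖ := norm_pos_iff.mpr hnv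
  have hdiffA : triPt d0 sA sB sC A' a b - A' = W + z • nv := by
    rw [triPt, ← hW, ← hnvdef, ← hz]; abel
  have hnormA : ‖triPt d0 sA sB sC A' a b - A'‖^2 = sA := by
    rw [hdiffA, @norm_add_sq_real, real_inner_smul_right, hWnv, norm_smul]
    have h1 : z^2 * ‖nv‖^2 = triR sA sB sC a b := by
      rw [hz, div_pow, Real.sq_sqrt hR]
      field_simp
    rw [triR, ← hW] at h1
    rw [mul_pow, Real.norm_eq_abs, sq_abs]
    linarith [h1]
  refine ⟨hnormA, ?_, ?_⟩
  · have hdiff : triPt d0 sA sB sC A' a b - (A' + a) = (W + z • nv) - a := by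
      rw [triPt, ← hW, ← hnvdef, ← hz]; abel
    rw [hdiff, @norm_sub_sq_real, ← hdiffA, hnormA, hdiffA]
    rw [inner_add_left, real_inner_smul_left, hWa, hnva, real_inner_self_eq_norm_sq]
    ring
  · have hdiff : triPt d0 sA sB sC A' a b - (A' + b) = (W + z • nv) - b := by
      rw [triPt, ← hW, ← hnvdef, ← hz]; abel
    rw [hdiff, @norm_sub_sq_real, ← hdiffA, hnormA, hdiffA]
    rw [inner_add_left, real_inner_smul_left, hWb, hnvb, real_inner_self_eq_norm_sq]
    ring

section Base

variable {a b d0 : E}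

lemma tri_base_delta (h : LinearIndependent ℝ ![a, b, d0]) : triDelta a b ≠ 0 := by
  have hpair : LinearIndependent ℝ ![a, b] := by
    apply li_pair
    intro s t hst
    have := triple_rel h s t 0 (by simpa using hst)
    exact ⟨this.1, this.2.1⟩
  rw [triDelta]
  exact ne_of_gt (gram_det_pos' hpair)

lemma tri_base_nv (h : LinearIndependent ℝ ![a, b, d0]) : triNv d0 a b ≠ 0 := by
  intro h0
  rw [triNv, sub_sub, ← sub_eq_zero] at h0
  have : (-((⟪d0,a⟫ * ⟪b,b⟫ - ⟪d0,b⟫ * ⟪a,b⟫)/triDelta a b)) • a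
      + (-((⟪d0,b⟫ * ⟪a,a⟫ - ⟪d0,a⟫ * ⟪a,b⟫)/triDelta a b)) • b + (1:ℝ) • d0 = 0 := by
    simp only [neg_smul, one_smul]
    rw [← sub_eq_zero] at h0 ⊢
    convert h0 using 1
    abel
  exact one_ne_zero (triple_rel h _ _ _ this).2.2

lemma tri_base_W (h : LinearIndependent ℝ ![a, b, d0]) :
    triW (‖d0‖^2) (‖d0 - a‖^2) (‖d0 - b‖^2) a b = d0 - triNv d0 a b := by
  have hs1 : (‖d0‖^2 - ‖d0 - a‖^2 + ⟪a,a⟫)/2 = ⟪d0,a⟫ := by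
    rw [@norm_sub_sq_real, real_inner_self_eq_norm_sq]
    ring
  have hs2 : (‖d0‖^2 - ‖d0 - b‖^2 + ⟪b,b⟫)/2 = ⟪d0,b⟫ := by
    rw [@norm_sub_sq_real, real_inner_self_eq_norm_sq]
    ring
  rw [triW, triX, triY, hs1, hs2, triNv]
  abel

lemma tri_base_R (h : LinearIndependent ℝ ![a, b, d0]) :
    triR (‖d0‖^2) (‖d0 - a‖^2) (‖d0 - b‖^2) a b = ‖triNv d0 a b‖^2 := by
  have hΔ := tri_base_delta h
  rw [triR, tri_base_W h, @norm_sub_sq_real]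
  have hd0nv : ⟪d0, triNv d0 a b⟫ = ‖triNv d0 a b‖^2 := by
    nth_rewrite 1 [show d0 = triNv d0 a b + (d0 - triNv d0 a b) by abel]
    have : d0 - triNv d0 a b = ((⟪d0,a⟫ * ⟪b,b⟫ - ⟪d0,b⟫ * ⟪a,b⟫)/triDelta a b) • a
        + ((⟪d0,b⟫ * ⟪a,a⟫ - ⟪d0,a⟫ * ⟪a,b⟫)/triDelta a b) • b := by
      rw [triNv]; abel
    rw [inner_add_left, this, inner_add_left, real_inner_smul_left, real_inner_smul_left,
      real_inner_comm (triNv d0 a b) a, real_inner_comm (triNv d0 a b) b,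
      triNv_inner_a d0 a b hΔ, triNv_inner_b d0 a b hΔ, real_inner_self_eq_norm_sq]
    ring
  rw [hd0nv]
  ring

lemma tri_base_pt (h : LinearIndependent ℝ ![a, b, d0]) (A : E) :
    triPt d0 (‖d0‖^2) (‖d0 - a‖^2) (‖d0 - b‖^2) A a b = A + d0 := by
  have hnv := tri_base_nv h
  have hnvn : ‖triNv d0 a b‖ ≠ 0 := norm_ne_zero_iff.mpr hnv
  rw [triPt, tri_base_R h, tri_base_W h, Real.sqrt_sq (norm_nonneg _), div_self hnvn, one_smul]
  abel

end Base

/-- Trilateration: near a nondegenerate tetrahedron, the apex position solving the three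
distance constraints exists and is close to the original. -/
lemma trilaterate (A B C D : E) (h : LinearIndependent ℝ ![B - A, C - A, D - A])
    {ε : ℝ} (hε : 0 < ε) :
    ∃ δ : ℝ, 0 < δ ∧ ∀ A' B' C' : E, dist A' A < δ → dist B' B < δ → dist C' C < δ →
      ∃ D' : E, dist D' D < ε ∧ dist D' A' = dist D A ∧ dist D' B' = dist D B ∧
        dist D' C' = dist D C := by
  classical
  set d0 := D - A with hd0
  set sA := ‖d0‖^2 with hsA
  set sB := ‖d0 - (B - A)‖^2 with hsB
  set sC := ‖d0 - (C - A)‖^2 with hsC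
  have hΔ0 : triDelta (B - A) (C - A) ≠ 0 := tri_base_delta h
  have hnv0 : triNv d0 (B - A) (C - A) ≠ 0 := tri_base_nv h
  have hR0 : 0 < triR sA sB sC (B - A) (C - A) := by
    rw [hsA, hsB, hsC, tri_base_R h]
    have : 0 < ‖triNv d0 (B - A) (C - A)‖ := norm_pos_iff.mpr hnv0
    positivity
  have hpt0 : triPt d0 sA sB sC A (B - A) (C - A) = D := by
    rw [hsA, hsB, hsC, tri_base_pt h A]
    rw [hd0]; abel
  -- continuity of the components
  have hca : Continuous (fun P : E × E × E => P.2.1 - P.1) := by fun_prop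
  have hcb : Continuous (fun P : E × E × E => P.2.2 - P.1) := by fun_prop
  have hg11 : Continuous (fun P : E × E × E => (⟪P.2.1 - P.1, P.2.1 - P.1⟫ : ℝ)) :=
    hca.inner hca
  have hg12 : Continuous (fun P : E × E × E => (⟪P.2.1 - P.1, P.2.2 - P.1⟫ : ℝ)) :=
    hca.inner hcb
  have hg22 : Continuous (fun P : E × E × E => (⟪P.2.2 - P.1, P.2.2 - P.1⟫ : ℝ)) :=
    hcb.inner hcb
  have hda : Continuous (fun P : E × E × E => (⟪d0, P.2.1 - P.1⟫ : ℝ)) :=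
    continuous_const.inner hca
  have hdb : Continuous (fun P : E × E × E => (⟪d0, P.2.2 - P.1⟫ : ℝ)) :=
    continuous_const.inner hcb
  have hΔc : Continuous (fun P : E × E × E => triDelta (P.2.1 - P.1) (P.2.2 - P.1)) := by
    simp only [triDelta]
    exact (hg11.mul hg22).sub (hg12.pow 2)
  set P0 : E × E × E := (A, B, C) with hP0
  have hP0Δ : triDelta (P0.2.1 - P0.1) (P0.2.2 - P0.1) ≠ 0 := hΔ0
  have hxc : ContinuousAt (fun P : E × E × E => triX sA sB sC (P.2.1 - P.1) (P.2.2 - P.1)) P0 := by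
    simp only [triX]
    exact ContinuousAt.div (by fun_prop) hΔc.continuousAt hP0Δ
  have hyc : ContinuousAt (fun P : E × E × E => triY sA sB sC (P.2.1 - P.1) (P.2.2 - P.1)) P0 := by
    simp only [triY]
    exact ContinuousAt.div (by fun_prop) hΔc.continuousAt hP0Δ
  have hWc : ContinuousAt (fun P : E × E × E => triW sA sB sC (P.2.1 - P.1) (P.2.2 - P.1)) P0 := by
    simp only [triW]
    exact (hxc.smul hca.continuousAt).add (hyc.smul hcb.continuousAt)
  have hnvc : ContinuousAt (fun P : E × E × E => triNv d0 (P.2.1 - P.1) (P.2.2 - P.1)) P0 := by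
    simp only [triNv]
    apply ContinuousAt.sub
    apply ContinuousAt.sub continuousAt_const
    · exact (ContinuousAt.div (by fun_prop) hΔc.continuousAt hP0Δ).smul hca.continuousAt
    · exact (ContinuousAt.div (by fun_prop) hΔc.continuousAt hP0Δ).smul hcb.continuousAt
  have hRc : ContinuousAt (fun P : E × E × E => triR sA sB sC (P.2.1 - P.1) (P.2.2 - P.1)) P0 := by
    simp only [triR]
    exact ContinuousAt.sub continuousAt_const ((hWc.norm).pow 2)
  have hnvne : ‖triNv d0 (P0.2.1 - P0.1) (P0.2.2 - P0.1)‖ ≠ 0 := norm_ne_zero_iff.mpr hnv0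
  have hFc : ContinuousAt (fun P : E × E × E =>
      triPt d0 sA sB sC P.1 (P.2.1 - P.1) (P.2.2 - P.1)) P0 := by
    simp only [triPt]
    apply ContinuousAt.add
    · exact (continuous_fst.continuousAt).add hWc
    · apply ContinuousAt.smul _ hnvc
      apply ContinuousAt.div _ hnvc.norm hnvne
      exact Real.continuous_sqrt.continuousAt.comp hRc
  -- eventual conditions
  have ev1 : ∀ᶠ P : E × E × E in nhds P0,
      triDelta (P.2.1 - P.1) (P.2.2 - P.1) ≠ 0 := hΔc.continuousAt.eventually_ne hP0Δ
  have ev2 : ∀ᶠ P : E × E × E in nhds P0,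
      triNv d0 (P.2.1 - P.1) (P.2.2 - P.1) ≠ 0 := hnvc.eventually_ne hnv0
  have ev3 : ∀ᶠ P : E × E × E in nhds P0,
      0 < triR sA sB sC (P.2.1 - P.1) (P.2.2 - P.1) := hRc.eventually (eventually_gt_nhds hR0)
  have ev4 : ∀ᶠ P : E × E × E in nhds P0,
      dist (triPt d0 sA sB sC P.1 (P.2.1 - P.1) (P.2.2 - P.1)) D < ε := by
    have := hFc.tendsto
    rw [hpt0] at this
    exact this (Metric.ball_mem_nhds D hε)
  have hev := (ev1.and (ev2.and (ev3.and ev4)))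
  rw [Metric.eventually_nhds_iff] at hev
  obtain ⟨δ, hδ, hball⟩ := hev
  refine ⟨δ, hδ, ?_⟩
  intro A' B' C' hA hB hC
  have hdist : dist ((A', B', C') : E × E × E) P0 < δ := by
    rw [Prod.dist_eq, Prod.dist_eq]
    exact max_lt hA (max_lt hB hC)
  obtain ⟨h1, h2, h3, h4⟩ := hball hdist
  obtain ⟨e1, e2, e3⟩ := triPt_exact d0 sA sB sC A' (B' - A') (C' - A') h1 h2 (le_of_lt h3)
  refine ⟨triPt d0 sA sB sC A' (B' - A') (C' - A'), h4, ?_, ?_, ?_⟩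
  · rw [dist_eq_norm, dist_eq_norm]
    apply norm_eq_of_sq (norm_nonneg _)
    rw [e1, hsA, hd0]
  · rw [dist_eq_norm, dist_eq_norm]
    apply norm_eq_of_sq (norm_nonneg _)
    rw [show A' + (B' - A') = B' by abel] at e2
    rw [e2, hsB, hd0, show D - A - (B - A) = D - B by abel]
  · rw [dist_eq_norm, dist_eq_norm]
    apply norm_eq_of_sq (norm_nonneg _)
    rw [show A' + (C' - A') = C' by abel] at e3
    rw [e3, hsC, hd0, show D - A - (C - A) = D - C by abel]


lemma clique_linIndep {V : Type*} (G : SimpleGraph V) (p : V → E)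
    (hgen : ∀ S : Finset V, S.card = 4 →
      (∀ a ∈ S, ∀ b ∈ S, a ≠ b → G.Adj a b) →
      AffineIndependent ℝ (fun x : {x // x ∈ S} => p x.1))
    (a b c d : V)
    (hab : a ≠ b) (hac : a ≠ c) (had : a ≠ d) (hbc : b ≠ c) (hbd : b ≠ d) (hcd : c ≠ d)
    (Hab : G.Adj a b) (Hac : G.Adj a c) (Had : G.Adj a d)
    (Hbc : G.Adj b c) (Hbd : G.Adj b d) (Hcd : G.Adj c d) :
    LinearIndependent ℝ ![p b - p a, p c - p a, p d - p a] := by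
  classical
  set S : Finset V := {a, b, c, d} with hS
  have hcard : S.card = 4 := by
    rw [hS, Finset.card_insert_of_notMem (by simp [hab, hac, had]),
        Finset.card_insert_of_notMem (by simp [hbc, hbd]),
        Finset.card_insert_of_notMem (by simp [hcd]), Finset.card_singleton]
  have hclq : ∀ x ∈ S, ∀ y ∈ S, x ≠ y → G.Adj x y := by
    intro x hx y hy hxy
    rw [hS] at hx hy
    simp only [Finset.mem_insert, Finset.mem_singleton] at hx hy
    rcases hx with rfl|rfl|rfl|rfl <;> rcases hy with rfl|rfl|rfl|rfl <;>
      first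
        | exact absurd rfl hxy
        | exact Hab | exact Hab.symm | exact Hac | exact Hac.symm
        | exact Had | exact Had.symm | exact Hbc | exact Hbc.symm
        | exact Hbd | exact Hbd.symm | exact Hcd | exact Hcd.symm
  have hAI := hgen S hcard hclq
  have hma : a ∈ S := by simp [hS]
  have hmb : b ∈ S := by simp [hS]
  have hmc : c ∈ S := by simp [hS]
  have hmd : d ∈ S := by simp [hS]
  set f : Fin 4 → {x // x ∈ S} := ![⟨a, hma⟩, ⟨b, hmb⟩, ⟨c, hmc⟩, ⟨d, hmd⟩] with hf
  have hfi : Function.Injective f := by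
    intro i j hij
    fin_cases i <;> fin_cases j <;> simp_all [hf, Subtype.ext_iff] <;>
      first
        | rfl
        | exact absurd hij hab | exact absurd hij.symm hab
        | exact absurd hij hac | exact absurd hij.symm hac
        | exact absurd hij had | exact absurd hij.symm had
        | exact absurd hij hbc | exact absurd hij.symm hbc
        | exact absurd hij hbd | exact absurd hij.symm hbd
        | exact absurd hij hcd | exact absurd hij.symm hcd
  have hcomp := hAI.comp_embedding ⟨f, hfi⟩
  have heq : (fun x : {x // x ∈ S} => p x.1) ∘ f = ![p a, p b, p c, p d] := by
    funext i
    fin_cases i <;> simp [hf]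
  rw [show ((fun x : {x // x ∈ S} => p x.1) ∘ (⟨f, hfi⟩ : Fin 4 ↪ {x // x ∈ S}))
      = (fun x : {x // x ∈ S} => p x.1) ∘ f from rfl, heq] at hcomp
  exact linIndep_of_affIndep hcomp

lemma move_vertex {V : Type*} [DecidableEq V] (G : SimpleGraph V) (u w x y : V)
    (p : V → E) (huw : G.Adj u w)
    (hnb : ∀ z : V, G.Adj u z → z = w ∨ z = x ∨ z = y)
    (hxu : x ≠ u) (hyu : y ≠ u)
    (hli : LinearIndependent ℝ ![p y - p x, p w - p x, p u - p x])
    {ε : ℝ} (hε : 0 < ε) :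
    ∃ q : V → E, (∀ z : V, dist (q z) (p z) < ε) ∧
      (∀ a b : V, G.Adj a b → s(a, b) ≠ s(u, w) → dist (q a) (q b) = dist (p a) (p b)) ∧
      dist (q u) (q w) ≠ dist (p u) (p w) := by
  obtain ⟨D', hD1, hD2, hD3, hD4⟩ := flex_one (p x) (p y) (p w) (p u) hli hε
  have hwu : w ≠ u := huw.ne'
  refine ⟨Function.update p u D', ?_, ?_, ?_⟩
  · intro z
    by_cases hz : z = u
    · subst hz; rw [Function.update_self]; exact hD1
    · rw [Function.update_of_ne hz, dist_self]; exact hε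
  · intro a b hadj hsym
    by_cases ha : a = u
    · subst ha
      rcases hnb b hadj with rfl | rfl | rfl
      · exact absurd rfl hsym
      · rw [Function.update_self, Function.update_of_ne hxu]; exact hD2
      · rw [Function.update_self, Function.update_of_ne hyu]; exact hD3
    · by_cases hb : b = u
      · have hb' : b = u := hb
        have hadj' : G.Adj u a := by rw [← hb']; exact hadj.symm
        rcases hnb a hadj' with ha' | ha' | ha'
        · exact absurd (by rw [ha', hb']; exact Sym2.eq_swap) hsym
        · rw [hb', ha', Function.update_of_ne hxu, Function.update_self,
            dist_comm _ D', dist_comm _ (p u)]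
          exact hD2
        · rw [hb', ha', Function.update_of_ne hyu, Function.update_self,
            dist_comm _ D', dist_comm _ (p u)]
          exact hD3
      · rw [Function.update_of_ne ha, Function.update_of_ne hb]
  · rw [Function.update_self, Function.update_of_ne hwu]
    exact hD4

end Geometry

universe uV

theorem tree_aux (n : ℕ) (hn : 4 ≤ n) :
    ∀ {V : Type uV} [Fintype V] (G : SimpleGraph V) (v : Fin n ≃ V),
      (∀ i j : Fin n, i.val < 3 → j.val < 3 → i ≠ j → G.Adj (v i) (v j)) →
      (∀ i : Fin n, 3 ≤ i.val →
        ∃ N : Finset (Fin n), N.card = 3 ∧ (∀ j ∈ N, j < i) ∧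
          (∀ j : Fin n, j < i → (G.Adj (v i) (v j) ↔ j ∈ N)) ∧
          (∀ j ∈ N, ∀ k ∈ N, j ≠ k → G.Adj (v j) (v k))) →
      ∀ (u w : V), G.Adj u w → ∀ (p : V → EuclideanSpace ℝ (Fin 3)),
      (∀ S : Finset V, S.card = 4 →
        (∀ a ∈ S, ∀ b ∈ S, a ≠ b → G.Adj a b) →
        AffineIndependent ℝ (fun x : {x // x ∈ S} => p x.1)) →
      ∀ ε : ℝ, 0 < ε →
      ∃ q : V → EuclideanSpace ℝ (Fin 3),
        (∀ x : V, dist (q x) (p x) < ε) ∧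
        (∀ a b : V, G.Adj a b → s(a, b) ≠ s(u, w) →
          dist (q a) (q b) = dist (p a) (p b)) ∧
        dist (q u) (q w) ≠ dist (p u) (p w) := by
  induction n, hn using Nat.le_induction with
  | base =>
    intro V _ G v htri h3tree u w huw p hgen ε hε
    classical
    -- the graph is complete
    have key : ∀ i j : Fin 4, i.val = 3 → j.val < 3 → G.Adj (v i) (v j) := by
      intro i j hi3 hj3
      obtain ⟨N, hN3, hNlt, hNiff, _⟩ := h3tree i (by omega)
      have hji : j < i := by rw [Fin.lt_def]; omega
      apply (hNiff j hji).mpr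
      have hsub : N ⊆ Finset.univ.filter (· < i) :=
        fun m hm => Finset.mem_filter.mpr ⟨Finset.mem_univ m, hNlt m hm⟩
      have hieq : i = (3 : Fin 4) := Fin.ext (by simpa using hi3)
      subst hieq
      have hcardf : ((Finset.univ.filter (· < (3 : Fin 4))) : Finset (Fin 4)).card = 3 := by
        decide
      have hNeq := Finset.eq_of_subset_of_card_le hsub (by rw [hcardf, hN3])
      rw [hNeq, Finset.mem_filter]
      exact ⟨Finset.mem_univ j, hji⟩
    have hcomplete : ∀ z1 z2 : V, z1 ≠ z2 → G.Adj z1 z2 := by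
      intro z1 z2 hne
      have hij : v.symm z1 ≠ v.symm z2 := fun h => hne (by
        rw [← v.apply_symm_apply z1, ← v.apply_symm_apply z2, h])
      have hgoal : G.Adj (v (v.symm z1)) (v (v.symm z2)) → G.Adj z1 z2 := by
        rw [Equiv.apply_symm_apply, Equiv.apply_symm_apply]; exact id
      apply hgoal
      by_cases hi : (v.symm z1).val < 3
      · by_cases hj : (v.symm z2).val < 3
        · exact htri _ _ hi hj hij
        · have : (v.symm z2).val = 3 := by omega
          exact (key _ _ this hi).symm
      · have hi3 : (v.symm z1).val = 3 := by omega
        have hj : (v.symm z2).val < 3 := by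
          have : (v.symm z2).val ≠ 3 := fun h => hij (Fin.ext (by omega))
          omega
        exact key _ _ hi3 hj
    -- pick the two other vertices
    set i0 := v.symm u with hi0
    set j0 := v.symm w with hj0
    have hij0 : i0 ≠ j0 := fun h => huw.ne (by
      rw [← v.apply_symm_apply u, ← v.apply_symm_apply w, ← hi0, ← hj0, h])
    have hcard2 : ((Finset.univ : Finset (Fin 4)) \ {i0, j0}).card = 2 := by
      rw [Finset.card_sdiff_of_subset (Finset.subset_univ _)]
      rw [Finset.card_insert_of_notMem (by simp [hij0]), Finset.card_singleton]
      simp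
    obtain ⟨k1, k2, hk12, hkset⟩ := Finset.card_eq_two.mp hcard2
    have hk1mem : k1 ∈ (Finset.univ : Finset (Fin 4)) \ {i0, j0} := by rw [hkset]; simp
    have hk2mem : k2 ∈ (Finset.univ : Finset (Fin 4)) \ {i0, j0} := by rw [hkset]; simp
    simp only [Finset.mem_sdiff, Finset.mem_univ, true_and, Finset.mem_insert,
      Finset.mem_singleton, not_or] at hk1mem hk2mem
    set x := v k1 with hx
    set y := v k2 with hy
    have hvinj : Function.Injective v := v.injective
    have hxu : x ≠ u := by
      rw [hx, ← v.apply_symm_apply u, ← hi0]; exact fun h => hk1mem.1 (hvinj h)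
    have hyu : y ≠ u := by
      rw [hy, ← v.apply_symm_apply u, ← hi0]; exact fun h => hk2mem.1 (hvinj h)
    have hxw : x ≠ w := by
      rw [hx, ← v.apply_symm_apply w, ← hj0]; exact fun h => hk1mem.2 (hvinj h)
    have hyw : y ≠ w := by
      rw [hy, ← v.apply_symm_apply w, ← hj0]; exact fun h => hk2mem.2 (hvinj h)
    have hxy : x ≠ y := by
      rw [hx, hy]; exact fun h => hk12 (hvinj h)
    have hwu : w ≠ u := huw.ne'
    have hnb : ∀ z : V, G.Adj u z → z = w ∨ z = x ∨ z = y := by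
      intro z hz
      have hzu : z ≠ u := hz.ne'
      by_cases h1 : v.symm z = j0
      · left; rw [← v.apply_symm_apply z, h1, hj0, v.apply_symm_apply]
      · by_cases h2 : v.symm z = i0
        · exact absurd (by rw [← v.apply_symm_apply z, h2, hi0, v.apply_symm_apply]) hzu
        · have hmem : v.symm z ∈ (Finset.univ : Finset (Fin 4)) \ {i0, j0} := by
            simp [h1, h2]
          rw [hkset] at hmem
          simp only [Finset.mem_insert, Finset.mem_singleton] at hmem
          rcases hmem with h3 | h3
          · right; left; rw [← v.apply_symm_apply z, h3, hx]
          · right; right; rw [← v.apply_symm_apply z, h3, hy]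
    have hli := clique_linIndep G p hgen x y w u hxy hxw hxu hyw hyu hwu
      (hcomplete _ _ hxy) (hcomplete _ _ hxw) (hcomplete _ _ hxu)
      (hcomplete _ _ hyw) (hcomplete _ _ hyu) (hcomplete _ _ hwu)
    exact move_vertex G u w x y p huw hnb hxu hyu hli hε
  | succ n hn IH =>
    intro V _ G v htri h3tree u w huw p hgen ε hε
    classical
    set vl := v (Fin.last n) with hvl
    have hlast3 : 3 ≤ (Fin.last n).val := by simp [Fin.last]; omega
    obtain ⟨N, hN3, hNlt, hNiff, hNclq⟩ := h3tree (Fin.last n) hlast3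
    obtain ⟨j1, j2, j3, hj12, hj13, hj23, hNeq⟩ := Finset.card_eq_three.mp hN3
    set x1 := v j1 with hx1
    set x2 := v j2 with hx2
    set x3 := v j3 with hx3
    have hj1m : j1 ∈ N := by rw [hNeq]; simp
    have hj2m : j2 ∈ N := by rw [hNeq]; simp
    have hj3m : j3 ∈ N := by rw [hNeq]; simp
    have hj1lt : j1 < Fin.last n := hNlt j1 hj1m
    have hj2lt : j2 < Fin.last n := hNlt j2 hj2m
    have hj3lt : j3 < Fin.last n := hNlt j3 hj3m
    have hA1 : G.Adj vl x1 := (hNiff j1 hj1lt).mpr hj1m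
    have hA2 : G.Adj vl x2 := (hNiff j2 hj2lt).mpr hj2m
    have hA3 : G.Adj vl x3 := (hNiff j3 hj3lt).mpr hj3m
    have h12 : G.Adj x1 x2 := hNclq j1 hj1m j2 hj2m hj12
    have h13 : G.Adj x1 x3 := hNclq j1 hj1m j3 hj3m hj13
    have h23 : G.Adj x2 x3 := hNclq j2 hj2m j3 hj3m hj23
    have hnbl : ∀ z : V, G.Adj vl z → z = x1 ∨ z = x2 ∨ z = x3 := by
      intro z hz
      have hzl : v.symm z ≠ Fin.last n := by
        intro h
        exact hz.ne' (by rw [← v.apply_symm_apply z, h, hvl])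
      have hlt : v.symm z < Fin.last n := by
        rw [Fin.lt_def]
        have h1 : (v.symm z).val < n + 1 := (v.symm z).isLt
        have h2 : (v.symm z).val ≠ n := fun h => hzl (Fin.ext (by simp [Fin.last, h]))
        simp only [Fin.val_last]
        omega
      have hadj : G.Adj (v (Fin.last n)) (v (v.symm z)) := by
        rw [Equiv.apply_symm_apply, ← hvl]; exact hz
      have hmem := (hNiff _ hlt).mp hadj
      rw [hNeq] at hmem
      simp only [Finset.mem_insert, Finset.mem_singleton] at hmem
      rcases hmem with h | h | h
      · left; rw [← v.apply_symm_apply z, h, hx1]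
      · right; left; rw [← v.apply_symm_apply z, h, hx2]
      · right; right; rw [← v.apply_symm_apply z, h, hx3]
    have hvinj : Function.Injective v := v.injective
    have hd12 : x1 ≠ x2 := fun h => hj12 (hvinj h)
    have hd13 : x1 ≠ x3 := fun h => hj13 (hvinj h)
    have hd23 : x2 ≠ x3 := fun h => hj23 (hvinj h)
    have hdl1 : x1 ≠ vl := hA1.ne'
    have hdl2 : x2 ≠ vl := hA2.ne'
    have hdl3 : x3 ≠ vl := hA3.ne'
    by_cases hcase : u = vl ∨ w = vl
    · -- the removed edge touches the last vertex: one-vertex rotation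
      have moveLast : ∀ w0 : V, G.Adj vl w0 →
          ∃ q : V → EuclideanSpace ℝ (Fin 3),
            (∀ z : V, dist (q z) (p z) < ε) ∧
            (∀ a b : V, G.Adj a b → s(a, b) ≠ s(vl, w0) →
              dist (q a) (q b) = dist (p a) (p b)) ∧
            dist (q vl) (q w0) ≠ dist (p vl) (p w0) := by
        intro w0 hw0
        rcases hnbl w0 hw0 with rfl | rfl | rfl
        · have hli := clique_linIndep G p hgen x2 x3 x1 vl hd23 hd12.symm hdl2
            hd13.symm hdl3 hdl1 h23 h12.symm hA2.symm h13.symm hA3.symm hA1.symm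
          exact move_vertex G vl x1 x2 x3 p hw0
            (fun z hz => hnbl z hz) hdl2 hdl3 hli hε
        · have hli := clique_linIndep G p hgen x1 x3 x2 vl hd13 hd12 hdl1
            hd23.symm hdl3 hdl2 h13 h12 hA1.symm h23.symm hA3.symm hA2.symm
          exact move_vertex G vl x2 x1 x3 p hw0
            (fun z hz => (hnbl z hz).elim (fun h => Or.inr (Or.inl h))
              (fun h => h.elim Or.inl (fun h' => Or.inr (Or.inr h')))) hdl1 hdl3 hli hε
        · have hli := clique_linIndep G p hgen x1 x2 x3 vl hd12 hd13 hdl1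
            hd23 hdl2 hdl3 h12 h13 hA1.symm h23 hA2.symm hA3.symm
          exact move_vertex G vl x3 x1 x2 p hw0
            (fun z hz => (hnbl z hz).elim (fun h => Or.inr (Or.inl h))
              (fun h => h.elim (fun h' => Or.inr (Or.inr h')) Or.inl)) hdl1 hdl2 hli hε
      rcases hcase with rfl | rfl
      · exact moveLast w huw
      · obtain ⟨q, hq1, hq2, hq3⟩ := moveLast u huw.symm
        refine ⟨q, hq1, ?_, ?_⟩
        · intro a b hadj hs
          exact hq2 a b hadj (fun h => hs (h.trans Sym2.eq_swap))
        · rw [dist_comm (q u), dist_comm (p u)]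
          exact hq3
    · -- the removed edge avoids the last vertex: induct on the smaller 3-tree
      push_neg at hcase
      obtain ⟨hu, hw⟩ := hcase
      set V' := {z : V // z ≠ vl} with hV'
      set G' : SimpleGraph V' := G.comap (Subtype.val) with hG'
      have hcastne : ∀ i : Fin n, v i.castSucc ≠ vl := by
        intro i h
        have := hvinj h
        have h2 : (i.castSucc : Fin (n+1)).val = (Fin.last n).val := congrArg Fin.val this
        simp [Fin.castSucc, Fin.last] at h2
        omega
      set v' : Fin n ≃ V' :=
        { toFun := fun i => ⟨v i.castSucc, hcastne i⟩
          invFun := fun z => (v.symm z.1).castPred (by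
            intro h
            exact z.2 (by rw [← v.apply_symm_apply z.1, h, hvl]))
          left_inv := by
            intro i
            simp [Fin.castPred_castSucc]
          right_inv := by
            intro z
            apply Subtype.ext
            simp [Fin.castSucc_castPred] } with hv'
      have hv'val : ∀ i : Fin n, (v' i).1 = v i.castSucc := fun i => rfl
      have htri' : ∀ i j : Fin n, i.val < 3 → j.val < 3 → i ≠ j → G'.Adj (v' i) (v' j) := by
        intro i j hi hj hne
        show G.Adj (v i.castSucc) (v j.castSucc)
        exact htri i.castSucc j.castSucc (by simpa using hi) (by simpa using hj)
          (fun h => hne (by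
            apply Fin.ext
            have := congrArg Fin.val h
            simpa using this))
      have h3tree' : ∀ i : Fin n, 3 ≤ i.val →
          ∃ N' : Finset (Fin n), N'.card = 3 ∧ (∀ j ∈ N', j < i) ∧
            (∀ j : Fin n, j < i → (G'.Adj (v' i) (v' j) ↔ j ∈ N')) ∧
            (∀ j ∈ N', ∀ k ∈ N', j ≠ k → G'.Adj (v' j) (v' k)) := by
        intro i hi
        obtain ⟨M, hM3, hMlt, hMiff, hMclq⟩ := h3tree i.castSucc (by simpa using hi)
        refine ⟨Finset.univ.filter (fun j : Fin n => j.castSucc ∈ M), ?_, ?_, ?_, ?_⟩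
        · rw [← hM3]
          apply Finset.card_bij (fun j _ => j.castSucc)
          · intro j hj
            simp only [Finset.mem_filter] at hj
            exact hj.2
          · intro j1' _ j2' _ h
            exact Fin.castSucc_injective n h
          · intro k hk
            have hklt : k < i.castSucc := hMlt k hk
            have hkn : k.val < n := by
              have h1 : k.val < i.castSucc.val := hklt
              have h2 : (i.castSucc).val = i.val := by simp
              omega
            refine ⟨⟨k.val, hkn⟩, ?_, ?_⟩
            · simp only [Finset.mem_filter]
              refine ⟨Finset.mem_univ _, ?_⟩
              have : (⟨k.val, hkn⟩ : Fin n).castSucc = k := Fin.ext (by simp)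
              rw [this]; exact hk
            · exact Fin.ext (by simp)
        · intro j hj
          simp only [Finset.mem_filter] at hj
          have := hMlt j.castSucc hj.2
          exact (Fin.castSucc_lt_castSucc_iff).mp this
        · intro j hj
          have hjc : j.castSucc < i.castSucc := (Fin.castSucc_lt_castSucc_iff).mpr hj
          have := hMiff j.castSucc hjc
          show G.Adj (v i.castSucc) (v j.castSucc) ↔ _
          rw [this]
          simp only [Finset.mem_filter, Finset.mem_univ, true_and]
        · intro j hj k hk hne
          simp only [Finset.mem_filter] at hj hk
          show G.Adj (v j.castSucc) (v k.castSucc)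
          exact hMclq j.castSucc hj.2 k.castSucc hk.2
            (fun h => hne (Fin.castSucc_injective n h))
      have hgen' : ∀ S' : Finset V', S'.card = 4 →
          (∀ a ∈ S', ∀ b ∈ S', a ≠ b → G'.Adj a b) →
          AffineIndependent ℝ (fun x : {x // x ∈ S'} => p x.1.1) := by
        intro S' hScard hSclq
        set S : Finset V := S'.map ⟨Subtype.val, Subtype.val_injective⟩ with hSdef
        have hcard : S.card = 4 := by rw [hSdef, Finset.card_map]; exact hScard
        have hclq : ∀ a ∈ S, ∀ b ∈ S, a ≠ b → G.Adj a b := by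
          intro a ha b hb hab
          rw [hSdef, Finset.mem_map] at ha hb
          obtain ⟨a', ha', rfl⟩ := ha
          obtain ⟨b', hb', rfl⟩ := hb
          exact hSclq a' ha' b' hb' (fun h => hab (congrArg Subtype.val h))
        have hAI := hgen S hcard hclq
        have hemb : ∀ x : {x // x ∈ S'}, x.1.1 ∈ S := by
          intro x
          rw [hSdef, Finset.mem_map]
          exact ⟨x.1, x.2, rfl⟩
        have := hAI.comp_embedding
          ⟨fun x : {x // x ∈ S'} => (⟨x.1.1, hemb x⟩ : {x // x ∈ S}),
           fun a b hab => Subtype.ext (Subtype.ext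
             (congrArg (fun t : {x // x ∈ S} => t.1) hab))⟩
        exact this
      have huw' : G'.Adj ⟨u, hu⟩ ⟨w, hw⟩ := huw
      -- trilateration data at the original configuration
      have hliT := clique_linIndep G p hgen x1 x2 x3 vl hd12 hd13 hdl1
        hd23 hdl2 hdl3 h12 h13 hA1.symm h23 hA2.symm hA3.symm
      obtain ⟨δ, hδ, hT⟩ := trilaterate (p x1) (p x2) (p x3) (p vl) hliT hε
      have hε' : 0 < min ε δ := lt_min hε hδ
      obtain ⟨q', hq1, hq2, hq3⟩ := IH G' v' htri' h3tree' ⟨u, hu⟩ ⟨w, hw⟩ huw'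
        (fun z => p z.1) hgen' (min ε δ) hε'
      obtain ⟨D', hD1, hD2, hD3, hD4⟩ := hT (q' ⟨x1, hdl1⟩) (q' ⟨x2, hdl2⟩) (q' ⟨x3, hdl3⟩)
        (lt_of_lt_of_le (hq1 ⟨x1, hdl1⟩) (min_le_right _ _))
        (lt_of_lt_of_le (hq1 ⟨x2, hdl2⟩) (min_le_right _ _))
        (lt_of_lt_of_le (hq1 ⟨x3, hdl3⟩) (min_le_right _ _))
      set q : V → EuclideanSpace ℝ (Fin 3) :=
        fun z => if h : z = vl then D' else q' ⟨z, h⟩ with hqdef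
      have hqvl : q vl = D' := dif_pos rfl
      have hqz : ∀ (z : V) (h : z ≠ vl), q z = q' ⟨z, h⟩ := fun z h => dif_neg h
      refine ⟨q, ?_, ?_, ?_⟩
      · intro z
        by_cases hz : z = vl
        · subst hz; rw [hqvl]; exact hD1
        · rw [hqz z hz]; exact lt_of_lt_of_le (hq1 ⟨z, hz⟩) (min_le_left _ _)
      · intro a b hadj hs
        by_cases haa : a = vl
        · subst haa
          have hbb : b ≠ vl := hadj.ne'
          rw [hqvl, hqz b hbb]
          rcases hnbl b hadj with rfl | rfl | rfl
          · exact hD2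
          · exact hD3
          · exact hD4
        · by_cases hbb : b = vl
          · have hadj' : G.Adj vl a := by rw [← hbb]; exact hadj.symm
            rw [hqz a haa, hbb, hqvl, dist_comm (q' ⟨a, haa⟩), dist_comm (p a)]
            rcases hnbl a hadj' with rfl | rfl | rfl
            · exact hD2
            · exact hD3
            · exact hD4
          · rw [hqz a haa, hqz b hbb]
            apply hq2 ⟨a, haa⟩ ⟨b, hbb⟩ hadj
            intro h
            apply hs
            rw [Sym2.eq_iff] at h ⊢
            rcases h with ⟨h1, h2⟩ | ⟨h1, h2⟩
            · exact Or.inl ⟨congrArg Subtype.val h1, congrArg Subtype.val h2⟩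
            · exact Or.inr ⟨congrArg Subtype.val h1, congrArg Subtype.val h2⟩
      · rw [hqz u hu, hqz w hw]
        exact hq3


/-- Removing any edge from a complete 3-tree yields a flexible linkage: near
any realization `p` in which every 4-clique of the graph has affinely
independent images, one can perturb the configuration so that all edge lengths
other than that of the removed edge `{u, w}` are preserved, while the length of
`{u, w}` changes. Here `v : Fin n ≃ V` is the 3-tree ordering. -/
theorem complete3Tree_remove_edge_flexible
    {V : Type*} [Fintype V] {n : ℕ} (hn : 4 ≤ n)
    (G : SimpleGraph V) (v : Fin n ≃ V)
    (htri : ∀ i j : Fin n, i.val < 3 → j.val < 3 → i ≠ j → G.Adj (v i) (v j))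
    (h3tree : ∀ i : Fin n, 3 ≤ i.val →
      ∃ N : Finset (Fin n), N.card = 3 ∧ (∀ j ∈ N, j < i) ∧
        (∀ j : Fin n, j < i → (G.Adj (v i) (v j) ↔ j ∈ N)) ∧
        (∀ j ∈ N, ∀ k ∈ N, j ≠ k → G.Adj (v j) (v k)))
    (u w : V) (huw : G.Adj u w)
    (p : V → EuclideanSpace ℝ (Fin 3))
    (hgen : ∀ S : Finset V, S.card = 4 →
      (∀ a ∈ S, ∀ b ∈ S, a ≠ b → G.Adj a b) →
      AffineIndependent ℝ (fun x : {x // x ∈ S} => p x.1))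
    (ε : ℝ) (hε : 0 < ε) :
    ∃ q : V → EuclideanSpace ℝ (Fin 3),
      (∀ x : V, dist (q x) (p x) < ε) ∧
      (∀ a b : V, G.Adj a b → s(a, b) ≠ s(u, w) →
        dist (q a) (q b) = dist (p a) (p b)) ∧
      dist (q u) (q w) ≠ dist (p u) (p w) := by
  exact tree_aux n hn G v htri h3tree u w huw p hgen ε hε
end

section
/- Let G = (V, E) be a complete 3-tree on n ≥ 3 vertices with ordering v₁,…,vₙ as in the definition; for i ≥ 4 let aᵢ, bᵢ, cᵢ denote the three earlier neighbors of vᵢ in a fixed order. Let p, q : V → EuclideanSpace ℝ (Fin 3) be two maps with dist (p u) (p v) = dist (q u) (q v) for every edge {u,v} ∈ E, with p vⱼ = q vⱼ for j = 1, 2, 3, and suppose that for every i ≥ 4 the determinant of the 3×3 matrix with columns p vᵢ − p aᵢ, p bᵢ − p aᵢ, p cᵢ − p aᵢ is nonzero and has the same sign as the determinant of the matrix with columns q vᵢ − q aᵢ, q bᵢ − q aᵢ, q cᵢ − q aᵢ. Then p = q. -/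
lemma helper_alg (d0 d1 d2 m0 m1 m2 w0 w1 w2 S T : ℝ)
    (id0 : (w0^2+w1^2+w2^2)*d0 = (d0*w0+d1*w1+d2*w2)*w0)
    (id1 : (w0^2+w1^2+w2^2)*d1 = (d0*w0+d1*w1+d2*w2)*w1)
    (id2 : (w0^2+w1^2+w2^2)*d2 = (d0*w0+d1*w1+d2*w2)*w2)
    (hm : d0*m0+d1*m1+d2*m2 = 0)
    (hS : S - T = d0*w0+d1*w1+d2*w2)
    (hT : S + T = m0*w0+m1*w1+m2*w2)
    (hdet : 0 < S*T) : d0 = 0 ∧ d1 = 0 ∧ d2 = 0 := by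
  have hprod : (d0*w0+d1*w1+d2*w2)*(S+T) = 0 := by
    linear_combination (d0*w0+d1*w1+d2*w2)*hT - m0*id0 - m1*id1 - m2*id2 +
      (w0^2+w1^2+w2^2)*hm
  by_cases hD : d0*w0+d1*w1+d2*w2 = 0
  · by_cases hww : w0^2+w1^2+w2^2 = 0
    · have h0 : w0 = 0 := by nlinarith [sq_nonneg w0, sq_nonneg w1, sq_nonneg w2]
      have h1 : w1 = 0 := by nlinarith [sq_nonneg w0, sq_nonneg w1, sq_nonneg w2]
      have h2 : w2 = 0 := by nlinarith [sq_nonneg w0, sq_nonneg w1, sq_nonneg w2]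
      have hS0 : S = 0 := by rw [h0, h1, h2] at hS hT; linarith
      rw [hS0] at hdet; simp at hdet
    · refine ⟨mul_left_cancel₀ hww ?_, mul_left_cancel₀ hww ?_, mul_left_cancel₀ hww ?_⟩
      · rw [mul_zero, id0, hD, zero_mul]
      · rw [mul_zero, id1, hD, zero_mul]
      · rw [mul_zero, id2, hD, zero_mul]
  · have hST : S + T = 0 := by
      rcases mul_eq_zero.mp hprod with h | h
      · exact absurd h hD
      · exact h
    nlinarith [sq_nonneg T]

lemma key_alg (d0 d1 d2 m0 m1 m2 u0 u1 u2 v0 v1 v2 S T : ℝ)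
    (hu : d0*u0+d1*u1+d2*u2 = 0) (hv : d0*v0+d1*v1+d2*v2 = 0)
    (hm : d0*m0+d1*m1+d2*m2 = 0)
    (hS : S - T = d0*(u1*v2-u2*v1)+d1*(u2*v0-u0*v2)+d2*(u0*v1-u1*v0))
    (hT : S + T = m0*(u1*v2-u2*v1)+m1*(u2*v0-u0*v2)+m2*(u0*v1-u1*v0))
    (hdet : 0 < S*T) : d0 = 0 ∧ d1 = 0 ∧ d2 = 0 := by
  refine helper_alg d0 d1 d2 m0 m1 m2 (u1*v2-u2*v1) (u2*v0-u0*v2) (u0*v1-u1*v0) S T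
    ?_ ?_ ?_ hm hS hT hdet
  · linear_combination (((u2*v0-u0*v2)*u2 - (u0*v1-u1*v0)*u1))*hv -
      (((u2*v0-u0*v2)*v2 - (u0*v1-u1*v0)*v1))*hu
  · linear_combination (((u0*v1-u1*v0)*u0 - (u1*v2-u2*v1)*u2))*hv -
      (((u0*v1-u1*v0)*v0 - (u1*v2-u2*v1)*v2))*hu
  · linear_combination (((u1*v2-u2*v1)*u1 - (u2*v0-u0*v2)*u0))*hv -
      (((u1*v2-u2*v1)*v1 - (u2*v0-u0*v2)*v0))*hu

lemma key_geo (x y A B C : EuclideanSpace ℝ (Fin 3))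
    (hA : dist x A = dist y A) (hB : dist x B = dist y B) (hC : dist x C = dist y C)
    (hdet : 0 < (Matrix.of fun (r k : Fin 3) => (![x - A, B - A, C - A] k) r).det *
              (Matrix.of fun (r k : Fin 3) => (![y - A, B - A, C - A] k) r).det) :
    x = y := by
  have sq : ∀ z w : EuclideanSpace ℝ (Fin 3),
      dist z w ^ 2 = (z 0 - w 0)^2 + (z 1 - w 1)^2 + (z 2 - w 2)^2 := by
    intro z w
    rw [EuclideanSpace.dist_eq, Real.sq_sqrt (by positivity)]
    simp [Fin.sum_univ_three, Real.dist_eq, sq_abs]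
  have hA' : (x 0 - A 0)^2+(x 1 - A 1)^2+(x 2 - A 2)^2
      = (y 0 - A 0)^2+(y 1 - A 1)^2+(y 2 - A 2)^2 := by
    rw [← sq x A, ← sq y A, hA]
  have hB' : (x 0 - B 0)^2+(x 1 - B 1)^2+(x 2 - B 2)^2
      = (y 0 - B 0)^2+(y 1 - B 1)^2+(y 2 - B 2)^2 := by
    rw [← sq x B, ← sq y B, hB]
  have hC' : (x 0 - C 0)^2+(x 1 - C 1)^2+(x 2 - C 2)^2
      = (y 0 - C 0)^2+(y 1 - C 1)^2+(y 2 - C 2)^2 := by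
    rw [← sq x C, ← sq y C, hC]
  rw [Matrix.det_fin_three, Matrix.det_fin_three] at hdet
  simp only [Matrix.of_apply, Matrix.cons_val_zero, Matrix.cons_val_one, Matrix.head_cons,
    Matrix.cons_val_two, Matrix.tail_cons, PiLp.sub_apply] at hdet
  obtain ⟨h0, h1, h2⟩ := key_alg (x 0 - y 0) (x 1 - y 1) (x 2 - y 2)
    (x 0 + y 0 - 2*A 0) (x 1 + y 1 - 2*A 1) (x 2 + y 2 - 2*A 2)
    (B 0 - A 0) (B 1 - A 1) (B 2 - A 2) (C 0 - A 0) (C 1 - A 1) (C 2 - A 2)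
    ((x 0 - A 0) * (B 1 - A 1) * (C 2 - A 2) - (x 0 - A 0) * (C 1 - A 1) * (B 2 - A 2) -
        (B 0 - A 0) * (x 1 - A 1) * (C 2 - A 2) + (B 0 - A 0) * (C 1 - A 1) * (x 2 - A 2) +
        (C 0 - A 0) * (x 1 - A 1) * (B 2 - A 2) - (C 0 - A 0) * (B 1 - A 1) * (x 2 - A 2))
    ((y 0 - A 0) * (B 1 - A 1) * (C 2 - A 2) - (y 0 - A 0) * (C 1 - A 1) * (B 2 - A 2) -
        (B 0 - A 0) * (y 1 - A 1) * (C 2 - A 2) + (B 0 - A 0) * (C 1 - A 1) * (y 2 - A 2) +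
        (C 0 - A 0) * (y 1 - A 1) * (B 2 - A 2) - (C 0 - A 0) * (B 1 - A 1) * (y 2 - A 2))
    (by linear_combination (hA' - hB')/2) (by linear_combination (hA' - hC')/2)
    (by linear_combination hA') (by ring) (by ring) (by linarith [hdet])
  refine PiLp.ext fun i => ?_
  fin_cases i
  · show x 0 = y 0; linarith
  · show x 1 = y 1; linarith
  · show x 2 = y 2; linarith
/-- A realization of a complete 3-tree linkage is uniquely determined by its
edge lengths, the placement of the base triangle, and the choice of flip (the
orientation sign of each sequentially placed tetrahedron). Here `v : Fin n ≃ V`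
is the 3-tree ordering and `a i`, `b i`, `c i` are the three earlier neighbors
of the `i`-th vertex, in a fixed order. -/
theorem complete3Tree_realization_unique_of_flips
    {V : Type*} [Fintype V] {n : ℕ} (hn : 3 ≤ n)
    (G : SimpleGraph V) (v : Fin n ≃ V) (a b c : Fin n → Fin n)
    (htri : ∀ i j : Fin n, i.val < 3 → j.val < 3 → i ≠ j → G.Adj (v i) (v j))
    (hnb : ∀ i : Fin n, 3 ≤ i.val →
      a i < i ∧ b i < i ∧ c i < i ∧
      a i ≠ b i ∧ a i ≠ c i ∧ b i ≠ c i ∧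
      (∀ j : Fin n, j < i →
        (G.Adj (v i) (v j) ↔ j = a i ∨ j = b i ∨ j = c i)) ∧
      G.Adj (v (a i)) (v (b i)) ∧ G.Adj (v (a i)) (v (c i)) ∧
      G.Adj (v (b i)) (v (c i)))
    (p q : V → EuclideanSpace ℝ (Fin 3))
    (hlen : ∀ x y : V, G.Adj x y → dist (p x) (p y) = dist (q x) (q y))
    (hbase : ∀ j : Fin n, j.val < 3 → p (v j) = q (v j))
    (hflip : ∀ i : Fin n, 3 ≤ i.val →
      0 < (Matrix.of fun (r k : Fin 3) =>
            (![p (v i) - p (v (a i)), p (v (b i)) - p (v (a i)),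
               p (v (c i)) - p (v (a i))] k) r).det *
          (Matrix.of fun (r k : Fin 3) =>
            (![q (v i) - q (v (a i)), q (v (b i)) - q (v (a i)),
               q (v (c i)) - q (v (a i))] k) r).det) :
    p = q := by
  have main : ∀ m : ℕ, ∀ i : Fin n, i.val = m → p (v i) = q (v i) := by
    intro m
    induction m using Nat.strong_induction_on with
    | _ m IH =>
      intro i him
      by_cases h3 : i.val < 3
      · exact hbase i h3
      · have h3' : 3 ≤ i.val := le_of_not_gt h3
        obtain ⟨ha, hb, hc, -, -, -, hadj, -, -, -⟩ := hnb i h3'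
        have IHa : p (v (a i)) = q (v (a i)) := IH (a i).val (him ▸ ha) (a i) rfl
        have IHb : p (v (b i)) = q (v (b i)) := IH (b i).val (him ▸ hb) (b i) rfl
        have IHc : p (v (c i)) = q (v (c i)) := IH (c i).val (him ▸ hc) (c i) rfl
        have hA := hlen (v i) (v (a i)) ((hadj (a i) ha).mpr (Or.inl rfl))
        have hB := hlen (v i) (v (b i)) ((hadj (b i) hb).mpr (Or.inr (Or.inl rfl)))
        have hC := hlen (v i) (v (c i)) ((hadj (c i) hc).mpr (Or.inr (Or.inr rfl)))
        rw [← IHa] at hA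
        rw [← IHb] at hB
        rw [← IHc] at hC
        have hd := hflip i h3'
        rw [← IHa, ← IHb, ← IHc] at hd
        exact key_geo _ _ _ _ _ hA hB hC hd
  funext z
  have := main (v.symm z).val (v.symm z) rfl
  simpa using this
end
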